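/- arXiv:1810.11158 — 7 statements merged into one kernel-verified Lean document; each statement's English description precedes it below -/
import Mathlib

section
/- For every x ∈ [0,1] and positive integer k, the tent map satisfies t_k(x) = σ(kx) + Σ_{i=1}^{k-1} 2(-1)^i σ(kx - i), where σ(y) = max(y, 0) is the ReLU function. -/
noncomputable def tent (k : ℕ) (x : ℝ) : ℝ :=
  if Even ⌊(k : ℝ) * x⌋ then (k : ℝ) * x - ⌊(k : ℝ) * x⌋
  else 1 - (k : ℝ) * x + ⌊(k : ℝ) * x⌋

lemma sum_closed (y : ℝ) (m : ℕ) :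
    ∑ i ∈ Finset.Ico 1 (m+1), 2 * (-1:ℝ)^i * (y - i) =
      ((-1:ℝ)^m - 1) * y + (if Even m then -(m:ℝ) else (m:ℝ)+1) := by
  induction m with
  | zero => simp
  | succ m ih =>
    rw [Finset.sum_Ico_succ_top (by omega), ih]
    rcases Nat.even_or_odd m with h | h
    · have h1 : ¬ Even (m+1) := by simp [Nat.even_add_one, h]
      simp only [h, if_true, h1, if_false, h.neg_one_pow, pow_succ]
      push_cast
      ring
    · have h0 : ¬ Even m := Nat.not_even_iff_odd.mpr h
      have h1 : Even (m+1) := h.add_one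
      simp only [h0, if_false, h1, if_true, h.neg_one_pow, pow_succ]
      push_cast
      ring

theorem tent_eq_relu_sum (k : ℕ) (hk : 0 < k)
    (x : ℝ) (hx : x ∈ Set.Icc (0 : ℝ) 1) :
    tent k x = max ((k : ℝ) * x) 0 +
      ∑ i ∈ Finset.Ico 1 k, 2 * (-1 : ℝ) ^ i * max ((k : ℝ) * x - i) 0 := by
  obtain ⟨hx0, hx1⟩ := hx
  set y : ℝ := (k : ℝ) * x with hy
  have hy0 : 0 ≤ y := by positivity
  have hkpos : (0:ℝ) < k := by exact_mod_cast hk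
  have hyk : y ≤ k := by nlinarith
  set n : ℕ := ⌊y⌋.toNat with hndef
  have hn : (n : ℤ) = ⌊y⌋ := Int.toNat_of_nonneg (Int.floor_nonneg.mpr hy0)
  have hnk : n ≤ k := by
    have : ⌊y⌋ ≤ (k:ℤ) := by
      have := Int.floor_le_floor hyk
      simpa using this
    omega
  have hny : (n : ℝ) ≤ y := by
    have := Int.floor_le y
    rw [← hn] at this
    exact_mod_cast this
  have hylt : y < (n : ℝ) + 1 := by
    have := Int.lt_floor_add_one y
    rw [← hn] at this
    exact_mod_cast this
  set m : ℕ := min n (k-1) with hmdef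
  have hm1 : m + 1 ≤ k := by omega
  have hmn : m ≤ n := min_le_left _ _
  have hsum : ∑ i ∈ Finset.Ico 1 k, 2 * (-1:ℝ)^i * max (y - i) 0 =
      ∑ i ∈ Finset.Ico 1 (m+1), 2 * (-1:ℝ)^i * (y - i) := by
    rw [← Finset.sum_subset (Finset.Ico_subset_Ico le_rfl hm1)]
    · apply Finset.sum_congr rfl
      intro i hi
      simp only [Finset.mem_Ico] at hi
      have hiy : (i : ℝ) ≤ y := by
        have : (i : ℝ) ≤ m := by exact_mod_cast Nat.lt_succ_iff.mp hi.2
        have hmy : (m : ℝ) ≤ y := le_trans (by exact_mod_cast hmn) hny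
        linarith
      rw [max_eq_left (by linarith)]
    · intro i hi hni
      simp only [Finset.mem_Ico] at hi hni
      have hi1 : m + 1 ≤ i := by omega
      rcases le_or_gt n (k-1) with hc | hc
      · have hmeq : m = n := by omega
        have : y ≤ i := by
          have : ((m:ℝ)) + 1 ≤ i := by exact_mod_cast hi1
          rw [hmeq] at this
          linarith
        rw [max_eq_right (by linarith)]
        ring
      · have : n = k := by omega
        omega
  rw [hsum, sum_closed, max_eq_left hy0]
  show (if Even ⌊y⌋ then y - ⌊y⌋ else 1 - y + ⌊y⌋) = _
  rw [← hn]
  rcases le_or_gt n (k-1) with hc | hc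
  · have hmeq : m = n := by omega
    rw [hmeq]
    rcases Nat.even_or_odd n with h | h
    · rw [if_pos (by exact_mod_cast h), if_pos h, h.neg_one_pow]
      push_cast
      ring
    · rw [if_neg (by simpa using Nat.not_even_iff_odd.mpr h), if_neg (Nat.not_even_iff_odd.mpr h), h.neg_one_pow]
      push_cast
      ring
  · have hnek : n = k := by omega
    have hyeq : y = k := by
      have : (n : ℝ) ≤ y := hny
      rw [hnek] at this
      linarith
    have hmeq : m = k - 1 := by omega
    rcases Nat.even_or_odd k with h | h
    · have hmodd : Odd m := by
        rcases h with ⟨c, hcc⟩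
        refine ⟨c - 1, by omega⟩
      rw [if_pos (by rw [hnek]; exact_mod_cast h), if_neg (Nat.not_even_iff_odd.mpr hmodd),
        hmodd.neg_one_pow, hyeq, hnek]
      have : (m : ℝ) = (k : ℝ) - 1 := by
        rw [hmeq]; push_cast [Nat.cast_sub hk]; ring
      rw [this]
      push_cast
      ring
    · have hmeven : Even m := by
        rcases h with ⟨c, hcc⟩
        exact ⟨c, by omega⟩
      rw [if_neg (by rw [hnek]; simpa using Nat.not_even_iff_odd.mpr h), if_pos hmeven,
        hmeven.neg_one_pow, hyeq, hnek]
      have : (m : ℝ) = (k : ℝ) - 1 := by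
        rw [hmeq]; push_cast [Nat.cast_sub hk]; ring
      rw [this]
      push_cast
      ring
end

section
/- A k-dimensional affine subspace P in ℝ^n intersects at most Σ_{j=0}^{k} C(n, j) of the 2^n open orthants of ℝ^n. -/
/-- The open orthant of `ℝⁿ` with sign pattern `ε` (`true` ↦ positive). -/
def orthant (n : ℕ) (ε : Fin n → Bool) : Set (EuclideanSpace ℝ (Fin n)) :=
  {x | ∀ i, if ε i then 0 < x i else x i < 0}

open Finset in
theorem pascal_sum' (n k : ℕ) :
    ∑ j ∈ Finset.range (k+1), (n+1).choose j
      = ∑ j ∈ Finset.range (k+1), n.choose j + ∑ j ∈ Finset.range k, n.choose j := by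
  induction k with
  | zero => simp
  | succ k ih =>
    rw [Finset.sum_range_succ, ih, Finset.sum_range_succ (n := k+1),
      Finset.sum_range_succ (n := k), Nat.choose_succ_succ']
    ring

-- helper lemmas about affine maps
theorem aff_sub (V : Type) [AddCommGroup V] [Module ℝ V] (f : V →ᵃ[ℝ] ℝ) (a b : V) :
    f.linear (a - b) = f a - f b := by
  have := AffineMap.linearMap_vsub f a b
  simpa [vsub_eq_sub] using this

theorem aff_add (V : Type) [AddCommGroup V] [Module ℝ V] (f : V →ᵃ[ℝ] ℝ) (a b : V) :
    f (a + b) = f.linear a + f b := by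
  have := f.map_vadd b a
  simpa [vadd_eq_add] using this

set_option maxHeartbeats 1600000 in
open scoped Classical in
theorem key : ∀ (n : ℕ) (V : Type) [AddCommGroup V] [Module ℝ V] [FiniteDimensional ℝ V]
    (g : Fin n → (V →ᵃ[ℝ] ℝ)),
    (Finset.univ.filter (fun ε : Fin n → Bool =>
        ∃ v, ∀ i, if ε i then 0 < g i v else g i v < 0)).card
      ≤ ∑ j ∈ Finset.range (Module.finrank ℝ V + 1), n.choose j := by
  intro n
  induction n with
  | zero =>
    intro V _ _ _ g
    calc _ ≤ (Finset.univ : Finset (Fin 0 → Bool)).card := Finset.card_filter_le _ _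
    _ = 1 := by simp
    _ ≤ _ := by
        have h0 : (0:ℕ) ∈ Finset.range (Module.finrank ℝ V + 1) := by simp
        calc (1:ℕ) = (0:ℕ).choose 0 := rfl
        _ ≤ _ := Finset.single_le_sum (fun i _ => Nat.zero_le _) h0
  | succ n ih =>
    intro V _ _ _ g
    set k := Module.finrank ℝ V with hk
    set S : Finset (Fin (n+1) → Bool) := Finset.univ.filter (fun ε =>
        ∃ v, ∀ i, if ε i then 0 < g i v else g i v < 0) with hS
    set S' : Finset (Fin n → Bool) := Finset.univ.filter (fun ε =>
        ∃ v, ∀ i, if ε i then 0 < g i.castSucc v else g i.castSucc v < 0) with hS'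
    set St := S.filter (fun ε => ε (Fin.last n) = true) with hSt
    set Sf := S.filter (fun ε => ε (Fin.last n) = false) with hSf
    have hsplit : S.card = St.card + Sf.card := by
      rw [hSt, hSf]
      rw [← Finset.card_filter_add_card_filter_not (p := fun ε => ε (Fin.last n) = true)]
      congr 2
      ext ε
      simp
    have hinj : ∀ T ⊆ S, ∀ b, (∀ ε ∈ T, ε (Fin.last n) = b) →
        (T.image Fin.init).card = T.card := by
      intro T _ b hb
      apply Finset.card_image_of_injOn
      intro x hx y hy hxy
      have : Fin.snoc (Fin.init x) (x (Fin.last n)) = Fin.snoc (Fin.init y) (y (Fin.last n)) := by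
        rw [hxy, hb x hx, hb y hy]
      rwa [Fin.snoc_init_self, Fin.snoc_init_self] at this
    have hIt : (St.image Fin.init).card = St.card :=
      hinj St (Finset.filter_subset _ _) true (fun ε hε => (Finset.mem_filter.mp hε).2)
    have hIf : (Sf.image Fin.init).card = Sf.card :=
      hinj Sf (Finset.filter_subset _ _) false (fun ε hε => (Finset.mem_filter.mp hε).2)
    have hsub : (St.image Fin.init) ∪ (Sf.image Fin.init) ⊆ S' := by
      intro ε' hε'
      simp only [Finset.mem_union, Finset.mem_image] at hε'
      have : ∃ ε ∈ S, Fin.init ε = ε' := by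
        rcases hε' with ⟨ε, hε, h⟩ | ⟨ε, hε, h⟩
        · exact ⟨ε, (Finset.mem_filter.mp hε).1, h⟩
        · exact ⟨ε, (Finset.mem_filter.mp hε).1, h⟩
      rcases this with ⟨ε, hε, rfl⟩
      rcases (Finset.mem_filter.mp hε).2 with ⟨v, hv⟩
      refine Finset.mem_filter.mpr ⟨Finset.mem_univ _, ⟨v, fun i => ?_⟩⟩
      exact hv i.castSucc
    -- extract witnesses from intersection
    have hget : ∀ ε' ∈ (St.image Fin.init) ∩ (Sf.image Fin.init),
        (∃ v, 0 < g (Fin.last n) v ∧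
          ∀ i : Fin n, if ε' i then 0 < g i.castSucc v else g i.castSucc v < 0) ∧
        (∃ w, g (Fin.last n) w < 0 ∧
          ∀ i : Fin n, if ε' i then 0 < g i.castSucc w else g i.castSucc w < 0) := by
      intro ε' hε'
      rw [Finset.mem_inter] at hε'
      constructor
      · rcases Finset.mem_image.mp hε'.1 with ⟨ε, hε, rfl⟩
        rw [hSt, Finset.mem_filter] at hε
        rcases (Finset.mem_filter.mp hε.1).2 with ⟨v, hv⟩
        refine ⟨v, ?_, fun i => hv i.castSucc⟩
        have := hv (Fin.last n)
        rw [hε.2] at this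
        simpa using this
      · rcases Finset.mem_image.mp hε'.2 with ⟨ε, hε, rfl⟩
        rw [hSf, Finset.mem_filter] at hε
        rcases (Finset.mem_filter.mp hε.1).2 with ⟨w, hw⟩
        refine ⟨w, ?_, fun i => hw i.castSucc⟩
        have := hw (Fin.last n)
        rw [hε.2] at this
        simpa using this
    have hinter : ((St.image Fin.init) ∩ (Sf.image Fin.init)).card
        ≤ ∑ j ∈ Finset.range k, n.choose j := by
      by_cases hlin : (g (Fin.last n)).linear = 0
      · have : (St.image Fin.init) ∩ (Sf.image Fin.init) = ∅ := by
          apply Finset.eq_empty_of_forall_notMem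
          intro ε' hε'
          rcases hget ε' hε' with ⟨⟨v, hv, -⟩, ⟨w, hw, -⟩⟩
          have : g (Fin.last n) v - g (Fin.last n) w = 0 := by
            rw [← aff_sub, hlin]; simp
          linarith
        rw [this]; simp
      · -- nonzero linear part
        obtain ⟨x0, hx0⟩ : ∃ x0, (g (Fin.last n)).linear x0 ≠ 0 := by
          by_contra hc
          push_neg at hc
          exact hlin (LinearMap.ext fun x => by simpa using hc x)
        set glast := g (Fin.last n) with hglast
        obtain ⟨u, hu⟩ : ∃ u : V, u = ((-(glast 0)) / glast.linear x0) • x0 := ⟨_, rfl⟩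
        have hgu : glast u = 0 := by
          rw [hu, ← add_zero (((-(glast 0)) / glast.linear x0) • x0), aff_add, map_smul]
          rw [smul_eq_mul]
          field_simp
          ring
        set W := LinearMap.ker glast.linear with hW
        set h : Fin n → (W →ᵃ[ℝ] ℝ) := fun i =>
          (g i.castSucc).comp (AffineMap.const ℝ W u + W.subtype.toAffineMap) with hh
        have happ : ∀ (i : Fin n) (w : W), h i w = g i.castSucc (u + (w : V)) := by
          intro i w
          simp [hh]
        have hsurj : Function.Surjective glast.linear := by
          intro c
          refine ⟨(c / glast.linear x0) • x0, ?_⟩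
          rw [map_smul]
          rw [smul_eq_mul]
          field_simp
        have hfr : Module.finrank ℝ W + 1 = k := by
          have h2 := LinearMap.finrank_range_add_finrank_ker glast.linear
          rw [LinearMap.range_eq_top.mpr hsurj, finrank_top, Module.finrank_self, ← hW] at h2
          omega
        have hDsub : (St.image Fin.init) ∩ (Sf.image Fin.init) ⊆
            Finset.univ.filter (fun ε' : Fin n → Bool =>
              ∃ v, ∀ i, if ε' i then 0 < h i v else h i v < 0) := by
          intro ε' hε'
          rcases hget ε' hε' with ⟨⟨v, hv, hv'⟩, ⟨w, hw, hw'⟩⟩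
          have hab : 0 < glast v - glast w := by linarith
          obtain ⟨t, ht⟩ : ∃ t : ℝ, t = glast v / (glast v - glast w) := ⟨_, rfl⟩
          have ht0 : 0 < t := ht ▸ div_pos hv hab
          have ht1 : t < 1 := by
            rw [ht, div_lt_one hab]
            linarith
          obtain ⟨p, hp⟩ : ∃ p : V, p = t • (w - v) + v := ⟨_, rfl⟩
          have hgp : ∀ (f : V →ᵃ[ℝ] ℝ), f p = t * (f w - f v) + f v := by
            intro f
            rw [hp, aff_add, map_smul, aff_sub, smul_eq_mul]
          have hglp : glast p = 0 := by
            rw [hgp, ht]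
            field_simp
            ring
          have hpmem : p - u ∈ W := by
            rw [hW, LinearMap.mem_ker, aff_sub, hglp, hgu, sub_zero]
          refine Finset.mem_filter.mpr ⟨Finset.mem_univ _, ⟨⟨p - u, hpmem⟩, fun i => ?_⟩⟩
          have hups : u + (p - u) = p := by abel
          have heval : h i ⟨p - u, hpmem⟩ = g i.castSucc p := by
            rw [happ i ⟨p - u, hpmem⟩]
            exact congrArg _ hups
          rw [heval]
          have hvi := hv' i
          have hwi := hw' i
          by_cases hb : ε' i = true
          · simp only [hb, if_true] at hvi hwi ⊢
            rw [hgp]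
            nlinarith [mul_pos ht0 hwi, mul_pos (sub_pos.mpr ht1) hvi]
          · simp only [hb] at hvi hwi ⊢
            simp only [if_false, Bool.false_eq_true] at hvi hwi ⊢
            rw [hgp]
            nlinarith [mul_pos ht0 (neg_pos.mpr hwi), mul_pos (sub_pos.mpr ht1) (neg_pos.mpr hvi)]
        calc ((St.image Fin.init) ∩ (Sf.image Fin.init)).card
            ≤ _ := Finset.card_le_card hDsub
          _ ≤ ∑ j ∈ Finset.range (Module.finrank ℝ W + 1), n.choose j := ih W h
          _ = ∑ j ∈ Finset.range k, n.choose j := by rw [hfr]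
    have hunion : ((St.image Fin.init) ∪ (Sf.image Fin.init)).card ≤ S'.card :=
      Finset.card_le_card hsub
    have hS'le := ih V (fun i => g i.castSucc)
    calc S.card = St.card + Sf.card := hsplit
      _ = (St.image Fin.init).card + (Sf.image Fin.init).card := by rw [hIt, hIf]
      _ = ((St.image Fin.init) ∪ (Sf.image Fin.init)).card
          + ((St.image Fin.init) ∩ (Sf.image Fin.init)).card :=
            (Finset.card_union_add_card_inter _ _).symm
      _ ≤ (∑ j ∈ Finset.range (k+1), n.choose j) + ∑ j ∈ Finset.range k, n.choose j :=
            Nat.add_le_add (le_trans hunion hS'le) hinter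
      _ = _ := (pascal_sum' n k).symm

open scoped Classical in
theorem affine_subspace_orthant_count (n k : ℕ)
    (P : AffineSubspace ℝ (EuclideanSpace ℝ (Fin n)))
    (hP : (P : Set (EuclideanSpace ℝ (Fin n))).Nonempty)
    (hdim : Module.finrank ℝ P.direction = k) :
    (Finset.univ.filter
        (fun ε : Fin n → Bool =>
          ((P : Set (EuclideanSpace ℝ (Fin n))) ∩ orthant n ε).Nonempty)).card
      ≤ ∑ j ∈ Finset.range (k + 1), n.choose j := by
  obtain ⟨p0, hp0⟩ := hP
  set V := P.direction with hV
  set g : Fin n → (V →ᵃ[ℝ] ℝ) := fun i =>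
    ((EuclideanSpace.proj i).toLinearMap.comp V.subtype).toAffineMap
      + AffineMap.const ℝ V (p0 i) with hg
  have happ : ∀ (i : Fin n) (v : V), g i v = (v : EuclideanSpace ℝ (Fin n)) i + p0 i := by
    intro i v
    simp [hg]
  have hsub : (Finset.univ.filter
        (fun ε : Fin n → Bool =>
          ((P : Set (EuclideanSpace ℝ (Fin n))) ∩ orthant n ε).Nonempty))
      ⊆ (Finset.univ.filter (fun ε : Fin n → Bool =>
        ∃ v, ∀ i, if ε i then 0 < g i v else g i v < 0)) := by
    intro ε hε
    rcases (Finset.mem_filter.mp hε).2 with ⟨x, hxP, hxO⟩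
    have hv : x -ᵥ p0 ∈ V := AffineSubspace.vsub_mem_direction hxP hp0
    refine Finset.mem_filter.mpr ⟨Finset.mem_univ _, ⟨⟨x -ᵥ p0, hv⟩, fun i => ?_⟩⟩
    have : g i ⟨x -ᵥ p0, hv⟩ = x i := by
      rw [happ]
      simp [vsub_eq_sub]
    rw [this]
    exact hxO i
  calc _ ≤ _ := Finset.card_le_card hsub
    _ ≤ ∑ j ∈ Finset.range (Module.finrank ℝ V + 1), n.choose j := key n V g
    _ = _ := by rw [hdim]
end

section
/- For any total node count N, input dimension n₀, and depth L, the bound Π_{i=1}^{L} (Σ_{j=0}^{n₀} C(n_i, j)) with Σ n_i ≤ N is at most (e·N/(n₀L) + e)^{n₀L}. -/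
open Finset

/-- Sum of binomial coefficients bound: ∑_{j=0}^{k} C(n,j) ≤ C(n+k, k). -/
lemma sum_choose_le_add_choose (n k : ℕ) :
    ∑ j ∈ range (k + 1), n.choose j ≤ (n + k).choose k := by
  rw [Nat.add_choose_eq, Finset.Nat.sum_antidiagonal_eq_sum_range_succ_mk]
  refine Finset.sum_le_sum fun i hi => ?_
  have h1 : 1 ≤ k.choose (k - i) := Nat.choose_pos (Nat.sub_le _ _)
  calc n.choose i = n.choose i * 1 := (mul_one _).symm
    _ ≤ n.choose i * k.choose (k - i) := Nat.mul_le_mul_left _ h1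

/-- Product of binomials bound: C(a,b) * C(c,d) ≤ C(a+c, b+d). -/
lemma choose_mul_choose_le (a b c d : ℕ) :
    a.choose b * c.choose d ≤ (a + c).choose (b + d) := by
  rw [Nat.add_choose_eq]
  have hmem : ((b, d) : ℕ × ℕ) ∈ Finset.HasAntidiagonal.antidiagonal (b + d) :=
    Finset.HasAntidiagonal.mem_antidiagonal.mpr rfl
  exact Finset.single_le_sum (f := fun ij : ℕ × ℕ => a.choose ij.1 * c.choose ij.2)
    (fun _ _ => Nat.zero_le _) hmem

lemma prod_choose_le {ι : Type*} (s : Finset ι) (a b : ι → ℕ) :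
    ∏ i ∈ s, (a i).choose (b i) ≤ (∑ i ∈ s, a i).choose (∑ i ∈ s, b i) := by
  induction s using Finset.cons_induction with
  | empty => simp
  | cons x s hx ih =>
    rw [Finset.prod_cons, Finset.sum_cons, Finset.sum_cons]
    calc (a x).choose (b x) * ∏ i ∈ s, (a i).choose (b i)
        ≤ (a x).choose (b x) * (∑ i ∈ s, a i).choose (∑ i ∈ s, b i) :=
          Nat.mul_le_mul_left _ ih
      _ ≤ (a x + ∑ i ∈ s, a i).choose (b x + ∑ i ∈ s, b i) := choose_mul_choose_le _ _ _ _

/-- k^k ≤ e^k * k!. -/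
lemma pow_self_le_exp_mul_factorial (k : ℕ) :
    (k : ℝ) ^ k ≤ Real.exp 1 ^ k * k.factorial := by
  have h : (k : ℝ) ^ k / k.factorial ≤ Real.exp k := by
    calc (k : ℝ) ^ k / k.factorial
        ≤ ∑ i ∈ range (k + 1), (k : ℝ) ^ i / i.factorial := by
          refine Finset.single_le_sum (f := fun i => (k : ℝ) ^ i / i.factorial)
            (fun i _ => by positivity) (Finset.self_mem_range_succ k)
      _ ≤ Real.exp k := Real.sum_le_exp_of_nonneg (Nat.cast_nonneg k) _
  have hfac : (0 : ℝ) < k.factorial := by positivity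
  rw [div_le_iff₀ hfac] at h
  calc (k : ℝ) ^ k ≤ Real.exp k * k.factorial := h
    _ = Real.exp 1 ^ k * k.factorial := by
        rw [← Real.exp_nat_mul, mul_one]

/-- C(m, k) ≤ (e m / k)^k for 0 < k. -/
lemma choose_le_exp_pow (m k : ℕ) (hk : 0 < k) :
    ((m.choose k : ℕ) : ℝ) ≤ (Real.exp 1 * m / k) ^ k := by
  have hkR : (0 : ℝ) < k := by exact_mod_cast hk
  have h1 : ((m.choose k : ℕ) : ℝ) ≤ (m : ℝ) ^ k / k.factorial :=
    Nat.choose_le_pow_div k m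
  refine h1.trans ?_
  have hkk : (0:ℝ) < (k:ℝ)^k := pow_pos hkR k
  rw [div_pow, mul_pow, mul_div_assoc]
  have hre : Real.exp 1 ^ k * ((m:ℝ) ^ k / (k:ℝ) ^ k) = Real.exp 1 ^ k * (m:ℝ) ^ k / (k:ℝ) ^ k := by
    ring
  rw [hre, div_le_div_iff₀ (by positivity) hkk]
  calc (m : ℝ) ^ k * ((k : ℝ) ^ k) ≤ (m : ℝ) ^ k * (Real.exp 1 ^ k * k.factorial) := by
        exact mul_le_mul_of_nonneg_left (pow_self_le_exp_mul_factorial k) (by positivity)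
    _ = Real.exp 1 ^ k * (m : ℝ) ^ k * k.factorial := by ring

theorem pieces_bound_total (N n₀ L : ℕ) (hn₀ : 0 < n₀) (hL : 0 < L)
    (n : Fin L → ℕ) (hN : ∑ i, n i ≤ N) :
    ((∏ i, ∑ j ∈ Finset.range (n₀ + 1), (n i).choose j : ℕ) : ℝ)
      ≤ (Real.exp 1 * N / (n₀ * L) + Real.exp 1) ^ (n₀ * L) := by
  set K := n₀ * L with hK
  have hKpos : 0 < K := Nat.mul_pos hn₀ hL
  -- Step 1: nat bound
  have step1 : (∏ i, ∑ j ∈ Finset.range (n₀ + 1), (n i).choose j)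
      ≤ (N + K).choose K := by
    calc ∏ i, ∑ j ∈ Finset.range (n₀ + 1), (n i).choose j
        ≤ ∏ i : Fin L, (n i + n₀).choose n₀ :=
          Finset.prod_le_prod (fun _ _ => Nat.zero_le _)
            (fun i _ => sum_choose_le_add_choose (n i) n₀)
      _ ≤ (∑ i : Fin L, (n i + n₀)).choose (∑ _i : Fin L, n₀) :=
          prod_choose_le _ _ _
      _ = (∑ i, n i + n₀ * L).choose K := by
          rw [Finset.sum_add_distrib, Finset.sum_const, Finset.card_univ,
            Fintype.card_fin, smul_eq_mul, mul_comm]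
      _ ≤ (N + K).choose K := Nat.choose_le_choose _ (by omega)
  have step2 : (((N + K).choose K : ℕ) : ℝ) ≤ (Real.exp 1 * (N + K) / K) ^ K := by
    have := choose_le_exp_pow (N + K) K hKpos
    simpa using this
  have hKR : (0 : ℝ) < K := by exact_mod_cast hKpos
  have heq : Real.exp 1 * (↑N + ↑K) / ↑K = Real.exp 1 * N / (n₀ * L) + Real.exp 1 := by
    push_cast [hK]
    field_simp
  calc ((∏ i, ∑ j ∈ Finset.range (n₀ + 1), (n i).choose j : ℕ) : ℝ)
      ≤ (((N + K).choose K : ℕ) : ℝ) := by exact_mod_cast step1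
    _ ≤ (Real.exp 1 * (N + K) / K) ^ K := step2
    _ = (Real.exp 1 * N / (n₀ * L) + Real.exp 1) ^ (n₀ * L) := by
        rw [heq]
end

section
/- Let B ⊆ B₀ ⊆ ℝ^d where B₀ is a ball of radius l, B is measurable with Lebesgue measure m(B) > 0, and let S be an n-dimensional affine subspace of ℝ^d with 0 ≤ n < d. Then ∫_B d(x, S) dx / m(B) ≥ ((d−n)/(d−n+1)) · (Γ((d−n)/2 + 1)·Γ(n/2 + 1) / π^{d/2} · l^{−n} · m(B))^{1/(d−n)}. -/
open MeasureTheory Metric Set RealInnerProductSpace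

section Aux

noncomputable section

lemma exists_adapted_basis {E : Type*} [NormedAddCommGroup E] [InnerProductSpace ℝ E]
    [FiniteDimensional ℝ E] {n k : ℕ} (V : Submodule ℝ E)
    (hV : Module.finrank ℝ V = n) (hk : Module.finrank ℝ E = n + k) :
    ∃ B : OrthonormalBasis (Fin n ⊕ Fin k) ℝ E, ∀ j, B (Sum.inr j) ∈ Vᗮ := by
  have hVc : Module.finrank ℝ (Vᗮ : Submodule ℝ E) = k := by
    have := V.finrank_add_finrank_orthogonal
    omega
  let b₁ : OrthonormalBasis (Fin n) ℝ V := (stdOrthonormalBasis ℝ V).reindex (finCongr hV)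
  let b₂ : OrthonormalBasis (Fin k) ℝ (Vᗮ : Submodule ℝ E) :=
    (stdOrthonormalBasis ℝ (Vᗮ : Submodule ℝ E)).reindex (finCongr hVc)
  let f : Fin n ⊕ Fin k → E := Sum.elim (fun i => (b₁ i : E)) (fun j => (b₂ j : E))
  have hmem : ∀ j, f (Sum.inr j) ∈ Vᗮ := fun j => SetLike.coe_mem _
  have hon : Orthonormal ℝ f := by
    constructor
    · rintro (i | j)
      · exact b₁.orthonormal.1 i
      · exact b₂.orthonormal.1 j
    · rintro (i | j) (i' | j') hne <;> simp only [f, Sum.elim_inl, Sum.elim_inr]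
      · have := b₁.orthonormal.2 (i := i) (j := i') (by simpa using hne)
        simpa [Submodule.coe_inner] using this
      · exact Submodule.inner_right_of_mem_orthogonal (SetLike.coe_mem _) (SetLike.coe_mem _)
      · exact Submodule.inner_left_of_mem_orthogonal (SetLike.coe_mem _) (SetLike.coe_mem _)
      · have := b₂.orthonormal.2 (i := j) (j := j') (by simpa using hne)
        simpa [Submodule.coe_inner] using this
  have hsp : ⊤ ≤ Submodule.span ℝ (Set.range f) := by
    have h1 : Submodule.span ℝ (Set.range fun i => (b₁ i : E)) = V := by
      have h : (Set.range fun i => (b₁ i : E)) = V.subtype '' Set.range b₁ := by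
        ext x; simp [Set.range_comp]
      rw [h, Submodule.span_image]
      rw [show Set.range ⇑b₁ = Set.range ⇑b₁.toBasis by simp]
      rw [b₁.toBasis.span_eq, Submodule.map_subtype_top]
    have h2 : Submodule.span ℝ (Set.range fun j => (b₂ j : E)) = Vᗮ := by
      have h : (Set.range fun j => (b₂ j : E)) = (Vᗮ).subtype '' Set.range b₂ := by
        ext x; simp [Set.range_comp]
      rw [h, Submodule.span_image]
      rw [show Set.range ⇑b₂ = Set.range ⇑b₂.toBasis by simp]
      rw [b₂.toBasis.span_eq, Submodule.map_subtype_top]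
    rw [show Set.range f = (Set.range fun i => (b₁ i : E)) ∪ (Set.range fun j => (b₂ j : E))
        from Set.Sum.elim_range _ _]
    rw [Submodule.span_union, h1, h2, Submodule.sup_orthogonal_of_hasOrthogonalProjection]
  exact ⟨OrthonormalBasis.mk hon hsp, fun j => by
    simpa [OrthonormalBasis.coe_mk] using hmem j⟩

lemma vol_sum_sq_set {n : ℕ} (c : Fin n → ℝ) {l : ℝ} (hl : 0 ≤ l) :
    volume {a : Fin n → ℝ | ∑ i, (a i - c i)^2 ≤ l^2}
      = ENNReal.ofReal l ^ n *
        ENNReal.ofReal (Real.sqrt Real.pi ^ n / Real.Gamma (n / 2 + 1)) := by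
  rcases Nat.eq_zero_or_pos n with hn | hn
  · subst hn
    have : {a : Fin 0 → ℝ | ∑ i, (a i - c i)^2 ≤ l^2} = univ := by
      ext a; simp; positivity
    rw [this, MeasureTheory.volume_pi, Measure.pi_univ]
    simp [Real.Gamma_one]
  · haveI : Nonempty (Fin n) := Fin.pos_iff_nonempty.mp hn
    have hs : MeasurableSet {a : Fin n → ℝ | ∑ i, (a i - c i)^2 ≤ l^2} := by
      apply measurableSet_le _ measurable_const
      exact Finset.measurable_sum _ fun i _ => by fun_prop
    rw [← (EuclideanSpace.volume_preserving_symm_measurableEquiv_toLp (Fin n)).measure_preimage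
      hs.nullMeasurableSet]
    have hball : (MeasurableEquiv.toLp 2 (Fin n → ℝ)).symm ⁻¹'
          {a : Fin n → ℝ | ∑ i, (a i - c i)^2 ≤ l^2}
        = Metric.closedBall ((EuclideanSpace.equiv (Fin n) ℝ).symm c) l := by
      ext y
      have hDist : dist y ((EuclideanSpace.equiv (Fin n) ℝ).symm c)
          = Real.sqrt (∑ i, (y i - c i)^2) := by
        rw [EuclideanSpace.dist_eq]
        congr 1
        refine Finset.sum_congr rfl fun i _ => ?_
        rw [show ((EuclideanSpace.equiv (Fin n) ℝ).symm c) i = c i from rfl,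
          Real.dist_eq, sq_abs]
      simp only [Metric.mem_closedBall, mem_preimage, mem_setOf_eq, hDist]
      have hy : (0:ℝ) ≤ ∑ i, (y i - c i)^2 := by positivity
      have hco : ∀ i, (MeasurableEquiv.toLp 2 (Fin n → ℝ)).symm y i = y i := fun _ => rfl
      simp only [hco]
      constructor
      · intro h
        calc Real.sqrt (∑ i, (y i - c i)^2) ≤ Real.sqrt (l^2) := Real.sqrt_le_sqrt h
        _ = l := Real.sqrt_sq hl
      · intro h
        nlinarith [Real.sq_sqrt hy, Real.sqrt_nonneg (∑ i, (y i - c i)^2)]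
    rw [hball, EuclideanSpace.volume_closedBall]
    simp [Fintype.card_fin]

lemma vol_coord_le {F : Type*} [NormedAddCommGroup F] [InnerProductSpace ℝ F]
    [FiniteDimensional ℝ F] [MeasurableSpace F] [BorelSpace F] {n k : ℕ}
    (B : OrthonormalBasis (Fin n ⊕ Fin k) ℝ F)
    (c : Fin n → ℝ) (c' : Fin k → ℝ) {l t : ℝ} (hl : 0 ≤ l) (ht : 0 ≤ t) :
    volume {y : F | (∑ i, (⟪B (Sum.inl i), y⟫ - c i)^2 ≤ l^2) ∧
        (∑ j, (⟪B (Sum.inr j), y⟫ - c' j)^2 ≤ t^2)}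
      = (ENNReal.ofReal l ^ n *
          ENNReal.ofReal (Real.sqrt Real.pi ^ n / Real.Gamma (n / 2 + 1))) *
        (ENNReal.ofReal t ^ k *
          ENNReal.ofReal (Real.sqrt Real.pi ^ k / Real.Gamma (k / 2 + 1))) := by
  set s : Set (Fin n → ℝ) := {a | ∑ i, (a i - c i)^2 ≤ l^2} with hs_def
  set u : Set (Fin k → ℝ) := {a | ∑ j, (a j - c' j)^2 ≤ t^2} with hu_def
  have hs : MeasurableSet s := by
    apply measurableSet_le _ measurable_const
    exact Finset.measurable_sum _ fun i _ => by fun_prop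
  have hu : MeasurableSet u := by
    apply measurableSet_le _ measurable_const
    exact Finset.measurable_sum _ fun i _ => by fun_prop
  have mp3 := MeasureTheory.measurePreserving_sumPiEquivProdPi
    (fun _ : Fin n ⊕ Fin k => (volume : Measure ℝ))
  rw [← MeasureTheory.volume_pi] at mp3
  have hmeas : ((Measure.pi fun _ : Fin n => (volume : Measure ℝ)).prod
      (Measure.pi fun _ : Fin k => (volume : Measure ℝ)))
      = (volume : Measure ((Fin n → ℝ) × (Fin k → ℝ))) := by
    rw [MeasureTheory.Measure.volume_eq_prod, MeasureTheory.volume_pi, MeasureTheory.volume_pi]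
  rw [hmeas] at mp3
  have mp : MeasurePreserving
      ((MeasurableEquiv.sumPiEquivProdPi (fun _ : Fin n ⊕ Fin k => ℝ)) ∘
        (MeasurableEquiv.toLp 2 (Fin n ⊕ Fin k → ℝ)).symm ∘ B.repr) volume
      (volume : Measure ((Fin n → ℝ) × (Fin k → ℝ))) :=
    mp3.comp ((EuclideanSpace.volume_preserving_symm_measurableEquiv_toLp
      (Fin n ⊕ Fin k)).comp B.measurePreserving_repr)
  have hset : {y : F | (∑ i, (⟪B (Sum.inl i), y⟫ - c i)^2 ≤ l^2) ∧
        (∑ j, (⟪B (Sum.inr j), y⟫ - c' j)^2 ≤ t^2)} =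
      ((MeasurableEquiv.sumPiEquivProdPi (fun _ : Fin n ⊕ Fin k => ℝ)) ∘
        (MeasurableEquiv.toLp 2 (Fin n ⊕ Fin k → ℝ)).symm ∘ B.repr) ⁻¹' (s ×ˢ u) := by
    ext y
    have h1 : ∀ i, ((MeasurableEquiv.sumPiEquivProdPi (fun _ : Fin n ⊕ Fin k => ℝ))
        ((MeasurableEquiv.toLp 2 (Fin n ⊕ Fin k → ℝ)).symm (B.repr y))).1 i
        = ⟪B (Sum.inl i), y⟫ := fun i => (B.repr_apply_apply y (Sum.inl i) : _)
    have h2 : ∀ j, ((MeasurableEquiv.sumPiEquivProdPi (fun _ : Fin n ⊕ Fin k => ℝ))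
        ((MeasurableEquiv.toLp 2 (Fin n ⊕ Fin k → ℝ)).symm (B.repr y))).2 j
        = ⟪B (Sum.inr j), y⟫ := fun j => (B.repr_apply_apply y (Sum.inr j) : _)
    simp only [mem_setOf_eq, mem_preimage, Function.comp_apply, Set.mem_prod, hs_def, hu_def]
    simp only [h1, h2]
  rw [hset, mp.measure_preimage (hs.prod hu).nullMeasurableSet,
    MeasureTheory.Measure.volume_eq_prod, Measure.prod_prod,
    vol_sum_sq_set c hl, vol_sum_sq_set c' ht]

lemma le_infDist' {α : Type*} [MetricSpace α] {s : Set α} (hs : s.Nonempty) {x : α} {b : ℝ}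
    (h : ∀ y ∈ s, b ≤ dist x y) : b ≤ Metric.infDist x s := by
  by_contra hlt
  push_neg at hlt
  obtain ⟨y, hy, hd⟩ := (Metric.infDist_lt_iff hs).1 hlt
  exact absurd (h y hy) (by linarith)

end

end Aux

theorem plane_distance_lower_bound (d n : ℕ) (hn : n < d)
    (l : ℝ) (hl : 0 < l) (x₀ : EuclideanSpace ℝ (Fin d))
    (B : Set (EuclideanSpace ℝ (Fin d))) (hBm : MeasurableSet B)
    (hBsub : B ⊆ Metric.closedBall x₀ l) (hBpos : 0 < volume B)
    (S : AffineSubspace ℝ (EuclideanSpace ℝ (Fin d)))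
    (hSne : (S : Set (EuclideanSpace ℝ (Fin d))).Nonempty)
    (hSdim : Module.finrank ℝ S.direction = n) :
    (∫ x in B, Metric.infDist x (S : Set (EuclideanSpace ℝ (Fin d))))
        / (volume B).toReal
      ≥ ((d - n : ℝ) / (d - n + 1)) *
        ((Real.Gamma ((d - n : ℝ) / 2 + 1) * Real.Gamma ((n : ℝ) / 2 + 1)
            / Real.pi ^ ((d : ℝ) / 2)
          * l ^ (-(n : ℝ)) * (volume B).toReal) ^ ((1 : ℝ) / (d - n))) := by
  classical
  obtain ⟨p₀, hp₀⟩ := hSne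
  set k := d - n with hk_def
  have hk0 : 0 < k := by omega
  have hkd : n + k = d := by omega
  have hdim : Module.finrank ℝ (EuclideanSpace ℝ (Fin d)) = n + k := by
    rw [finrank_euclideanSpace_fin]; omega
  obtain ⟨Bb, hBb⟩ := exists_adapted_basis S.direction hSdim hdim
  set f : EuclideanSpace ℝ (Fin d) → ℝ :=
    fun x => Metric.infDist x (S : Set (EuclideanSpace ℝ (Fin d))) with hf_def
  have f_cont : Continuous f := Metric.continuous_infDist_pt _
  have f_nn : ∀ x, 0 ≤ f x := fun x => Metric.infDist_nonneg
  set G1 : ℝ := Real.Gamma ((n : ℝ) / 2 + 1) with hG1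
  set G2 : ℝ := Real.Gamma ((k : ℝ) / 2 + 1) with hG2
  have hG1pos : 0 < G1 := Real.Gamma_pos_of_pos (by positivity)
  have hG2pos : 0 < G2 := Real.Gamma_pos_of_pos (by positivity)
  have hsπ : 0 < Real.sqrt Real.pi := Real.sqrt_pos.mpr Real.pi_pos
  set C : ℝ := l ^ n * (Real.sqrt Real.pi ^ n / G1) * (Real.sqrt Real.pi ^ k / G2) with hC
  have hCpos : 0 < C := by positivity
  have hBfin : volume B ≠ ⊤ :=
    (lt_of_le_of_lt (measure_mono hBsub) measure_closedBall_lt_top).ne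
  set m : ℝ := (volume B).toReal with hm_def
  have hm : 0 < m := ENNReal.toReal_pos hBpos.ne' hBfin
  set T : ℝ := (m / C) ^ ((1:ℝ)/(k:ℝ)) with hT
  have hTpos : 0 < T := Real.rpow_pos_of_pos (by positivity) _
  have hTk : T ^ k = m / C := by
    rw [hT, ← Real.rpow_natCast ((m/C) ^ ((1:ℝ)/(k:ℝ))) k, ← Real.rpow_mul (by positivity),
      one_div, inv_mul_cancel₀ (by exact_mod_cast hk0.ne'), Real.rpow_one]
  -- tube volume bound
  have tube_vol : ∀ t : ℝ, 0 ≤ t →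
      volume {x | x ∈ B ∧ f x ≤ t} ≤ ENNReal.ofReal (C * t ^ k) := by
    intro t ht
    have hsub2 : {x | x ∈ B ∧ f x ≤ t} ⊆
        {y : EuclideanSpace ℝ (Fin d) |
          (∑ i, (⟪Bb (Sum.inl i), y⟫ - ⟪Bb (Sum.inl i), x₀⟫)^2 ≤ l^2) ∧
          (∑ j, (⟪Bb (Sum.inr j), y⟫ - ⟪Bb (Sum.inr j), p₀⟫)^2 ≤ t^2)} := by
      rintro x ⟨hxB, hxf⟩
      have honl : Orthonormal ℝ (fun i : Fin n => Bb (Sum.inl i)) :=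
        Bb.orthonormal.comp _ Sum.inl_injective
      have honr : Orthonormal ℝ (fun j : Fin k => Bb (Sum.inr j)) :=
        Bb.orthonormal.comp _ Sum.inr_injective
      constructor
      · have hb := Orthonormal.sum_inner_products_le (𝕜 := ℝ) (x - x₀) honl (s := Finset.univ)
        have hxl : ‖x - x₀‖ ≤ l := by
          have := hBsub hxB
          rwa [Metric.mem_closedBall, dist_eq_norm] at this
        calc ∑ i, (⟪Bb (Sum.inl i), x⟫ - ⟪Bb (Sum.inl i), x₀⟫)^2
            = ∑ i, ‖⟪(fun i : Fin n => Bb (Sum.inl i)) i, x - x₀⟫‖^2 := by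
              refine Finset.sum_congr rfl fun i _ => ?_
              rw [inner_sub_right, Real.norm_eq_abs, sq_abs]
          _ ≤ ‖x - x₀‖^2 := hb
          _ ≤ l^2 := by nlinarith [norm_nonneg (x - x₀)]
      · have key : ∀ s ∈ (S : Set (EuclideanSpace ℝ (Fin d))),
            ∑ j, (⟪Bb (Sum.inr j), x⟫ - ⟪Bb (Sum.inr j), p₀⟫)^2 ≤ dist x s ^ 2 := by
          intro s hs
          have hb := Orthonormal.sum_inner_products_le (𝕜 := ℝ) (x - s) honr (s := Finset.univ)
          have heq : ∀ j : Fin k, ⟪Bb (Sum.inr j), x⟫ - ⟪Bb (Sum.inr j), p₀⟫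
              = ⟪Bb (Sum.inr j), x - s⟫ := by
            intro j
            have hmemV : s - p₀ ∈ S.direction := AffineSubspace.vsub_mem_direction hs hp₀
            have hz : ⟪Bb (Sum.inr j), s - p₀⟫ = 0 :=
              Submodule.inner_left_of_mem_orthogonal hmemV (hBb j)
            have hxs : x - s = (x - p₀) - (s - p₀) := by abel
            rw [hxs, inner_sub_right, inner_sub_right, inner_sub_right]
            rw [inner_sub_right] at hz
            linarith
          calc ∑ j, (⟪Bb (Sum.inr j), x⟫ - ⟪Bb (Sum.inr j), p₀⟫)^2
              = ∑ j, ‖⟪(fun j : Fin k => Bb (Sum.inr j)) j, x - s⟫‖^2 := by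
                refine Finset.sum_congr rfl fun j _ => ?_
                rw [heq j, Real.norm_eq_abs, sq_abs]
            _ ≤ ‖x - s‖^2 := hb
            _ = dist x s ^ 2 := by rw [dist_eq_norm]
        have hsum_nn : (0:ℝ) ≤ ∑ j, (⟪Bb (Sum.inr j), x⟫ - ⟪Bb (Sum.inr j), p₀⟫)^2 := by
          positivity
        have hsqrt : Real.sqrt (∑ j, (⟪Bb (Sum.inr j), x⟫ - ⟪Bb (Sum.inr j), p₀⟫)^2) ≤ f x := by
          apply le_infDist' ⟨p₀, hp₀⟩
          intro y hy
          calc Real.sqrt (∑ j, (⟪Bb (Sum.inr j), x⟫ - ⟪Bb (Sum.inr j), p₀⟫)^2)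
              ≤ Real.sqrt (dist x y ^ 2) := Real.sqrt_le_sqrt (key y hy)
            _ = dist x y := Real.sqrt_sq dist_nonneg
        have := Real.sq_sqrt hsum_nn
        nlinarith [Real.sqrt_nonneg (∑ j, (⟪Bb (Sum.inr j), x⟫ - ⟪Bb (Sum.inr j), p₀⟫)^2),
          f_nn x]
    calc volume {x | x ∈ B ∧ f x ≤ t}
        ≤ volume {y : EuclideanSpace ℝ (Fin d) |
          (∑ i, (⟪Bb (Sum.inl i), y⟫ - ⟪Bb (Sum.inl i), x₀⟫)^2 ≤ l^2) ∧
          (∑ j, (⟪Bb (Sum.inr j), y⟫ - ⟪Bb (Sum.inr j), p₀⟫)^2 ≤ t^2)} := measure_mono hsub2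
      _ = (ENNReal.ofReal l ^ n *
            ENNReal.ofReal (Real.sqrt Real.pi ^ n / Real.Gamma ((n:ℝ) / 2 + 1))) *
          (ENNReal.ofReal t ^ k *
            ENNReal.ofReal (Real.sqrt Real.pi ^ k / Real.Gamma ((k:ℝ) / 2 + 1))) :=
        vol_coord_le Bb _ _ hl.le ht
      _ = ENNReal.ofReal (C * t ^ k) := by
          rw [← ENNReal.ofReal_pow hl.le, ← ENNReal.ofReal_pow ht,
            ← ENNReal.ofReal_mul (by positivity), ← ENNReal.ofReal_mul (by positivity),
            ← ENNReal.ofReal_mul (by positivity)]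
          congr 1
          rw [hC, ← hG1, ← hG2]
          ring
  -- integrability
  have f_int : IntegrableOn f B := by
    apply Measure.integrableOn_of_bounded (M := l + dist x₀ p₀) hBfin
      f_cont.aestronglyMeasurable
    refine ae_restrict_of_forall_mem hBm fun x hx => ?_
    rw [Real.norm_eq_abs, abs_of_nonneg (f_nn x)]
    calc f x ≤ dist x p₀ := Metric.infDist_le_dist_of_mem hp₀
      _ ≤ dist x x₀ + dist x₀ p₀ := dist_triangle _ _ _
      _ ≤ l + dist x₀ p₀ := by
          have := hBsub hx
          rw [Metric.mem_closedBall] at this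
          linarith
  -- layer cake
  have hlc := MeasureTheory.lintegral_eq_lintegral_meas_lt (volume.restrict B)
    (ae_of_all _ f_nn) f_cont.aemeasurable
  have f_meas_set : ∀ t : ℝ, MeasurableSet {a : EuclideanSpace ℝ (Fin d) | t < f a} :=
    fun t => measurableSet_lt measurable_const f_cont.measurable
  have hpt : ∀ t ∈ Ioc (0:ℝ) T,
      ENNReal.ofReal (m - C * t ^ k) ≤ (volume.restrict B) {a | t < f a} := by
    intro t ht
    have h1 : (volume.restrict B) {a | t < f a} = volume ({a | t < f a} ∩ B) :=
      Measure.restrict_apply (f_meas_set t)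
    have h2 : volume B ≤ volume ({a | t < f a} ∩ B) + ENNReal.ofReal (C * t ^ k) := by
      calc volume B ≤ volume (({a | t < f a} ∩ B) ∪ {x | x ∈ B ∧ f x ≤ t}) := by
            apply measure_mono
            intro x hx
            rcases le_or_gt (f x) t with h | h
            · exact Or.inr ⟨hx, h⟩
            · exact Or.inl ⟨h, hx⟩
        _ ≤ volume ({a | t < f a} ∩ B) + volume {x | x ∈ B ∧ f x ≤ t} := measure_union_le _ _
        _ ≤ volume ({a | t < f a} ∩ B) + ENNReal.ofReal (C * t ^ k) :=
            add_le_add_right (tube_vol t ht.1.le) _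
    rw [h1, ENNReal.ofReal_sub _ (mul_nonneg hCpos.le (pow_nonneg ht.1.le k)), hm_def,
      ENNReal.ofReal_toReal hBfin]
    exact tsub_le_iff_right.mpr h2
  -- integral of the lower bound
  have hnn : ∀ t ∈ Ioc (0:ℝ) T, 0 ≤ m - C * t ^ k := by
    intro t ht
    have h1 : t ^ k ≤ T ^ k := pow_le_pow_left₀ ht.1.le ht.2 k
    have h2 : C * t ^ k ≤ C * T ^ k := by nlinarith
    rw [hTk, mul_div_cancel₀ _ hCpos.ne'] at h2
    linarith
  have hInt : IntegrableOn (fun t : ℝ => m - C * t ^ k) (Ioc 0 T) :=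
    (continuous_const.sub (continuous_const.mul (continuous_pow k))).integrableOn_Ioc
  have hval : ∫ t in Ioc (0:ℝ) T, (m - C * t ^ k) = m * T * ((k:ℝ) / ((k:ℝ)+1)) := by
    rw [← intervalIntegral.integral_of_le hTpos.le]
    rw [intervalIntegral.integral_sub intervalIntegrable_const
      ((intervalIntegral.intervalIntegrable_pow k).const_mul C)]
    rw [intervalIntegral.integral_const, intervalIntegral.integral_const_mul, integral_pow]
    have hTk1 : T ^ (k + 1) = (m / C) * T := by rw [pow_succ, hTk]
    have hk1 : ((k:ℝ) + 1) ≠ 0 := by positivity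
    rw [hTk1]
    field_simp
    ring
  have chain : ENNReal.ofReal (m * T * ((k:ℝ) / ((k:ℝ)+1))) ≤
      ENNReal.ofReal (∫ x in B, f x) := by
    calc ENNReal.ofReal (m * T * ((k:ℝ) / ((k:ℝ)+1)))
        = ENNReal.ofReal (∫ t in Ioc (0:ℝ) T, (m - C * t ^ k)) := by rw [hval]
      _ = ∫⁻ t in Ioc (0:ℝ) T, ENNReal.ofReal (m - C * t ^ k) :=
          ofReal_integral_eq_lintegral_ofReal hInt
            (ae_restrict_of_forall_mem measurableSet_Ioc hnn)
      _ ≤ ∫⁻ t in Ioc (0:ℝ) T, (volume.restrict B) {a | t < f a} :=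
          setLIntegral_mono' measurableSet_Ioc hpt
      _ ≤ ∫⁻ t in Ioi (0:ℝ), (volume.restrict B) {a | t < f a} :=
          lintegral_mono_set Ioc_subset_Ioi_self
      _ = ∫⁻ x in B, ENNReal.ofReal (f x) := hlc.symm
      _ = ENNReal.ofReal (∫ x in B, f x) :=
          (ofReal_integral_eq_lintegral_ofReal f_int (ae_of_all _ f_nn)).symm
  have main_ineq : m * T * ((k:ℝ) / ((k:ℝ)+1)) ≤ ∫ x in B, f x :=
    (ENNReal.ofReal_le_ofReal_iff (integral_nonneg f_nn)).1 chain
  -- final arithmetic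
  have hcast : ((d:ℝ) - (n:ℝ)) = (k:ℝ) := by
    rw [hk_def, Nat.cast_sub hn.le]
  rw [ge_iff_le, hcast]
  have hsqrtpi : Real.sqrt Real.pi ^ n * Real.sqrt Real.pi ^ k = Real.pi ^ ((d:ℝ)/2) := by
    rw [← pow_add, hkd, Real.sqrt_eq_rpow, ← Real.rpow_natCast (Real.pi ^ ((1:ℝ)/2)) d,
      ← Real.rpow_mul Real.pi_pos.le]
    congr 1
    ring
  have hln : l ^ (-(n:ℝ)) = ((l:ℝ) ^ n)⁻¹ := by
    rw [← Real.rpow_natCast l n, ← Real.rpow_neg hl.le]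
  have hπpos : (0:ℝ) < Real.pi ^ ((d:ℝ)/2) := Real.rpow_pos_of_pos Real.pi_pos _
  have base_eq : G2 * G1 / Real.pi ^ ((d:ℝ)/2) * l ^ (-(n:ℝ)) * m = m / C := by
    rw [hln, hC, ← hsqrtpi]
    field_simp
  rw [← hG2, base_eq, ← hT, le_div_iff₀ hm]
  calc (k:ℝ)/((k:ℝ)+1) * T * m = m * T * ((k:ℝ)/((k:ℝ)+1)) := by ring
    _ ≤ ∫ x in B, f x := main_ineq
end

section
/- For two probability distributions μ and ν on ℝ with finite first moments, their Wasserstein-1 distance equals ∫_ℝ |F_μ(t) − F_ν(t)| dt, where F_μ and F_ν are the cumulative distribution functions. -/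
open MeasureTheory Set Filter ProbabilityTheory
open scoped Topology ENNReal

/-- Wasserstein-1 distance via couplings. -/
noncomputable def W1 {E : Type*} [MeasurableSpace E] [NormedAddCommGroup E]
    (μ ν : Measure E) : ℝ :=
  sInf {r : ℝ | ∃ π : Measure (E × E),
    IsProbabilityMeasure π ∧ π.map Prod.fst = μ ∧ π.map Prod.snd = ν ∧
    r = ∫ p, ‖p.1 - p.2‖ ∂π}

section Quantile

noncomputable def qf (μ : Measure ℝ) (u : ℝ) : ℝ := sInf {x | u ≤ cdf μ x}

variable {μ : Measure ℝ} [IsProbabilityMeasure μ]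

lemma qf_set_nonempty {u : ℝ} (hu : u < 1) : {x | u ≤ cdf μ x}.Nonempty := by
  obtain ⟨x, hx⟩ := ((tendsto_cdf_atTop μ).eventually (eventually_gt_nhds hu)).exists
  exact ⟨x, hx.le⟩

lemma qf_bddBelow {u : ℝ} (hu : 0 < u) : BddBelow {x | u ≤ cdf μ x} := by
  obtain ⟨x₀, hx₀⟩ : ∃ x₀, cdf μ x₀ < u := by
    have := (tendsto_cdf_atBot μ).eventually (eventually_lt_nhds hu)
    exact this.exists
  refine ⟨x₀, fun y hy => ?_⟩
  by_contra h
  push_neg at h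
  exact absurd (le_trans hy.out ((monotone_cdf μ) h.le)) (not_le.mpr hx₀)

lemma le_cdf_qf {u : ℝ} (hu : 0 < u) (hu1 : u < 1) : u ≤ cdf μ (qf μ u) := by
  have hgt : ∀ x, qf μ u < x → u ≤ cdf μ x := by
    intro x hx
    obtain ⟨y, hy, hyx⟩ := exists_lt_of_csInf_lt (qf_set_nonempty hu1) hx
    exact hy.out.trans ((monotone_cdf μ) hyx.le)
  have ht : Tendsto (cdf μ) (𝓝[>] (qf μ u)) (𝓝 (cdf μ (qf μ u))) :=
    ((cdf μ).right_continuous _).tendsto.mono_left (nhdsWithin_mono _ Ioi_subset_Ici_self)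
  refine ge_of_tendsto ht ?_
  filter_upwards [self_mem_nhdsWithin] with x hx using hgt x hx

lemma qf_le_iff {u t : ℝ} (hu : 0 < u) (hu1 : u < 1) : qf μ u ≤ t ↔ u ≤ cdf μ t := by
  constructor
  · intro h
    exact (le_cdf_qf hu hu1).trans ((monotone_cdf μ) h)
  · intro h
    exact csInf_le (qf_bddBelow hu) h

lemma qf_monotoneOn : MonotoneOn (qf μ) (Ioo 0 1) := by
  intro u hu v hv huv
  exact csInf_le_csInf (qf_bddBelow hu.1) (qf_set_nonempty hv.2)
    (fun x hx => le_trans huv hx)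

lemma qf_aemeasurable : AEMeasurable (qf μ) (volume.restrict (Ioo 0 1)) :=
  aemeasurable_restrict_of_monotoneOn measurableSet_Ioo qf_monotoneOn

lemma map_qf : (volume.restrict (Ioo (0:ℝ) 1)).map (qf μ) = μ := by
  have hprob : IsProbabilityMeasure (volume.restrict (Ioo (0:ℝ) 1)) :=
    ⟨by simp [Real.volume_Ioo]⟩
  have hm : IsProbabilityMeasure ((volume.restrict (Ioo (0:ℝ) 1)).map (qf μ)) :=
    Measure.isProbabilityMeasure_map qf_aemeasurable
  refine Measure.ext_of_Iic _ _ (fun t => ?_)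
  rw [Measure.map_apply_of_aemeasurable qf_aemeasurable measurableSet_Iic,
    Measure.restrict_apply' measurableSet_Ioo]
  have hset : (qf μ ⁻¹' Iic t) ∩ Ioo 0 1 = {u | u ≤ cdf μ t} ∩ Ioo 0 1 := by
    ext u
    simp only [mem_inter_iff, mem_preimage, mem_Iic, mem_Ioo, mem_setOf_eq]
    constructor
    · rintro ⟨h1, h2⟩; exact ⟨(qf_le_iff h2.1 h2.2).mp h1, h2⟩
    · rintro ⟨h1, h2⟩; exact ⟨(qf_le_iff h2.1 h2.2).mpr h1, h2⟩
  have hc0 : 0 ≤ cdf μ t := cdf_nonneg μ t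
  have hc1 : cdf μ t ≤ 1 := cdf_le_one μ t
  have hsub1 : Ioo 0 (cdf μ t) ⊆ {u | u ≤ cdf μ t} ∩ Ioo 0 1 := fun u hu =>
    ⟨hu.2.le, hu.1, lt_of_lt_of_le hu.2 hc1⟩
  have hsub2 : {u | u ≤ cdf μ t} ∩ Ioo 0 1 ⊆ Ioc 0 (cdf μ t) := fun u hu => ⟨hu.2.1, hu.1⟩
  have hvol : volume ({u | u ≤ cdf μ t} ∩ Ioo 0 1) = ENNReal.ofReal (cdf μ t) := by
    refine le_antisymm ?_ ?_
    · simpa [Real.volume_Ioc] using measure_mono (μ := volume) hsub2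
    · simpa [Real.volume_Ioo] using measure_mono (μ := volume) hsub1
  rw [hset, hvol, ofReal_cdf]

open scoped Classical in
lemma lintegral_if_abs (a b : ℝ) :
    ∫⁻ t, (if (a ≤ t ∧ ¬ b ≤ t) ∨ (b ≤ t ∧ ¬ a ≤ t) then (1:ℝ≥0∞) else 0)
      = ENNReal.ofReal |a - b| := by
  have hmem : ∀ t : ℝ, ((a ≤ t ∧ ¬ b ≤ t) ∨ (b ≤ t ∧ ¬ a ≤ t)) ↔ t ∈ Ico (min a b) (max a b) := by
    intro t
    simp only [mem_Ico, min_le_iff, lt_max_iff, not_le]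
    constructor
    · rintro (⟨h1, h2⟩ | ⟨h1, h2⟩)
      · exact ⟨Or.inl h1, Or.inr h2⟩
      · exact ⟨Or.inr h1, Or.inl h2⟩
    · rintro ⟨h1 | h1, h2 | h2⟩
      · exact absurd h1 (not_le.mpr h2)
      · exact Or.inl ⟨h1, h2⟩
      · exact Or.inr ⟨h1, h2⟩
      · exact absurd h1 (not_le.mpr h2)
  have hcongr : ∀ t : ℝ, (if (a ≤ t ∧ ¬ b ≤ t) ∨ (b ≤ t ∧ ¬ a ≤ t) then (1:ℝ≥0∞) else 0)
      = Set.indicator (Ico (min a b) (max a b)) (fun _ => (1:ℝ≥0∞)) t := by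
    intro t
    rw [Set.indicator_apply]
    exact if_congr (hmem t) rfl rfl
  rw [lintegral_congr hcongr, lintegral_indicator measurableSet_Ico]
  simp [Real.volume_Ico, max_sub_min_eq_abs, abs_sub_comm b a]

open scoped Classical in
lemma lintegral_if_restrict {c d : ℝ} (hc0 : 0 ≤ c) (hc1 : c ≤ 1) (hd0 : 0 ≤ d) (hd1 : d ≤ 1) :
    ∫⁻ u in Ioo (0:ℝ) 1, (if (u ≤ c ∧ ¬ u ≤ d) ∨ (u ≤ d ∧ ¬ u ≤ c) then (1:ℝ≥0∞) else 0)
      = ENNReal.ofReal |c - d| := by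
  have hmem : ∀ u : ℝ, ((u ≤ c ∧ ¬ u ≤ d) ∨ (u ≤ d ∧ ¬ u ≤ c)) ↔ u ∈ Ioc (min c d) (max c d) := by
    intro u
    simp only [mem_Ioc]
    constructor
    · rintro (⟨h1, h2⟩ | ⟨h1, h2⟩)
      · exact ⟨(min_le_right c d).trans_lt (not_le.mp h2), h1.trans (le_max_left c d)⟩
      · exact ⟨(min_le_left c d).trans_lt (not_le.mp h2), h1.trans (le_max_right c d)⟩
    · rintro ⟨h1, h2⟩
      by_cases hc : u ≤ c <;> by_cases hd : u ≤ d
      · exact absurd h1 (not_lt.mpr (le_min hc hd))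
      · exact Or.inl ⟨hc, hd⟩
      · exact Or.inr ⟨hd, hc⟩
      · exact absurd h2 (not_le.mpr (max_lt (not_le.mp hc) (not_le.mp hd)))
  have hcongr : ∀ u : ℝ, (if (u ≤ c ∧ ¬ u ≤ d) ∨ (u ≤ d ∧ ¬ u ≤ c) then (1:ℝ≥0∞) else 0)
      = Set.indicator (Ioc (min c d) (max c d)) (fun _ => (1:ℝ≥0∞)) u := by
    intro u
    rw [Set.indicator_apply]
    exact if_congr (hmem u) rfl rfl
  rw [lintegral_congr hcongr, lintegral_indicator measurableSet_Ioc,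
    Measure.restrict_restrict measurableSet_Ioc, setLIntegral_one]
  have hm0 : 0 ≤ min c d := le_min hc0 hd0
  have hM1 : max c d ≤ 1 := max_le hc1 hd1
  have hsub1 : Ioo (min c d) (max c d) ⊆ Ioc (min c d) (max c d) ∩ Ioo 0 1 := fun u hu =>
    ⟨⟨hu.1, hu.2.le⟩, hm0.trans_lt hu.1, hu.2.trans_le hM1⟩
  have hsub2 : Ioc (min c d) (max c d) ∩ Ioo 0 1 ⊆ Ioc (min c d) (max c d) := inter_subset_left
  have : volume (Ioc (min c d) (max c d) ∩ Ioo 0 1) = ENNReal.ofReal (max c d - min c d) := by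
    refine le_antisymm ?_ ?_
    · simpa [Real.volume_Ioc] using measure_mono (μ := volume) hsub2
    · simpa [Real.volume_Ioo] using measure_mono (μ := volume) hsub1
  rw [this, max_sub_min_eq_abs, abs_sub_comm d c]

open scoped Classical in
lemma qcost_eq (ν : Measure ℝ) [IsProbabilityMeasure ν] :
    ∫⁻ u, ENNReal.ofReal |qf μ u - qf ν u| ∂(volume.restrict (Ioo (0:ℝ) 1))
      = ∫⁻ t, ENNReal.ofReal |cdf μ t - cdf ν t| := by
  set P := volume.restrict (Ioo (0:ℝ) 1) with hP
  set f : ℝ → ℝ → ℝ≥0∞ := fun u t =>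
    if (qf μ u ≤ t ∧ ¬ qf ν u ≤ t) ∨ (qf ν u ≤ t ∧ ¬ qf μ u ≤ t) then 1 else 0 with hf
  have hstep1 : ∀ u : ℝ, ∫⁻ t, f u t = ENNReal.ofReal |qf μ u - qf ν u| := fun u =>
    lintegral_if_abs (qf μ u) (qf ν u)
  -- measurability of uncurry f
  have hφ : Measurable (fun q : ℝ × ℝ × ℝ =>
      if (q.1 ≤ q.2.2 ∧ ¬ q.2.1 ≤ q.2.2) ∨ (q.2.1 ≤ q.2.2 ∧ ¬ q.1 ≤ q.2.2)
        then (1:ℝ≥0∞) else 0) := by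
    have hA : MeasurableSet {q : ℝ × ℝ × ℝ | q.1 ≤ q.2.2} :=
      measurableSet_le measurable_fst measurable_snd.snd
    have hB : MeasurableSet {q : ℝ × ℝ × ℝ | q.2.1 ≤ q.2.2} :=
      measurableSet_le measurable_snd.fst measurable_snd.snd
    have hS : MeasurableSet {q : ℝ × ℝ × ℝ |
        (q.1 ≤ q.2.2 ∧ ¬ q.2.1 ≤ q.2.2) ∨ (q.2.1 ≤ q.2.2 ∧ ¬ q.1 ≤ q.2.2)} :=
      (hA.inter hB.compl).union (hB.inter hA.compl)
    exact Measurable.ite hS measurable_const measurable_const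
  have huncurry : AEMeasurable (Function.uncurry f) (P.prod volume) := by
    have h1 : AEMeasurable (fun p : ℝ × ℝ => qf μ p.1) (P.prod volume) :=
      (qf_aemeasurable (μ := μ)).comp_fst
    have h2 : AEMeasurable (fun p : ℝ × ℝ => qf ν p.1) (P.prod volume) :=
      (qf_aemeasurable (μ := ν)).comp_fst
    have := hφ.comp_aemeasurable (h1.prodMk (h2.prodMk measurable_snd.aemeasurable))
    exact this
  have hswap : ∫⁻ u, ∫⁻ t, f u t ∂volume ∂P = ∫⁻ t, ∫⁻ u, f u t ∂P ∂volume :=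
    lintegral_lintegral_swap huncurry
  have hstep2 : ∀ t : ℝ, ∫⁻ u, f u t ∂P = ENNReal.ofReal |cdf μ t - cdf ν t| := by
    intro t
    have hcongr : ∀ u ∈ Ioo (0:ℝ) 1, f u t =
        (if (u ≤ cdf μ t ∧ ¬ u ≤ cdf ν t) ∨ (u ≤ cdf ν t ∧ ¬ u ≤ cdf μ t) then (1:ℝ≥0∞) else 0) := by
      intro u hu
      exact if_congr (by rw [qf_le_iff hu.1 hu.2, qf_le_iff hu.1 hu.2]) rfl rfl
    rw [hP, setLIntegral_congr_fun measurableSet_Ioo hcongr]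
    exact lintegral_if_restrict (cdf_nonneg μ t) (cdf_le_one μ t) (cdf_nonneg ν t) (cdf_le_one ν t)
  calc ∫⁻ u, ENNReal.ofReal |qf μ u - qf ν u| ∂P
      = ∫⁻ u, ∫⁻ t, f u t ∂volume ∂P := by
        exact lintegral_congr fun u => (hstep1 u).symm
    _ = ∫⁻ t, ∫⁻ u, f u t ∂P ∂volume := hswap
    _ = ∫⁻ t, ENNReal.ofReal |cdf μ t - cdf ν t| := lintegral_congr hstep2

open scoped Classical in
lemma cost_ge (ν : Measure ℝ) [IsProbabilityMeasure ν] (π : Measure (ℝ × ℝ))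
    [IsProbabilityMeasure π] (h1 : π.map Prod.fst = μ) (h2 : π.map Prod.snd = ν) :
    ∫⁻ t, ENNReal.ofReal |cdf μ t - cdf ν t| ≤ ∫⁻ p, ENNReal.ofReal |p.1 - p.2| ∂π := by
  set f : ℝ × ℝ → ℝ → ℝ≥0∞ := fun p t =>
    if (p.1 ≤ t ∧ ¬ p.2 ≤ t) ∨ (p.2 ≤ t ∧ ¬ p.1 ≤ t) then 1 else 0 with hf
  have hstep1 : ∀ p : ℝ × ℝ, ∫⁻ t, f p t = ENNReal.ofReal |p.1 - p.2| := fun p =>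
    lintegral_if_abs p.1 p.2
  have hφ : Measurable (Function.uncurry f) := by
    have hA : MeasurableSet {q : (ℝ × ℝ) × ℝ | q.1.1 ≤ q.2} :=
      measurableSet_le measurable_fst.fst measurable_snd
    have hB : MeasurableSet {q : (ℝ × ℝ) × ℝ | q.1.2 ≤ q.2} :=
      measurableSet_le measurable_fst.snd measurable_snd
    exact Measurable.ite ((hA.inter hB.compl).union (hB.inter hA.compl))
      measurable_const measurable_const
  have hswap : ∫⁻ p, ∫⁻ t, f p t ∂volume ∂π = ∫⁻ t, ∫⁻ p, f p t ∂π ∂volume :=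
    lintegral_lintegral_swap hφ.aemeasurable
  have hpt : ∀ t : ℝ, ENNReal.ofReal |cdf μ t - cdf ν t| ≤ ∫⁻ p, f p t ∂π := by
    intro t
    set A : Set (ℝ × ℝ) := {p | p.1 ≤ t} with hA
    set B : Set (ℝ × ℝ) := {p | p.2 ≤ t} with hB
    have hAm : MeasurableSet A := measurableSet_le measurable_fst measurable_const
    have hBm : MeasurableSet B := measurableSet_le measurable_snd measurable_const
    have hπA : π A = μ (Iic t) := by
      rw [← h1, Measure.map_apply measurable_fst measurableSet_Iic]; rfl
    have hπB : π B = ν (Iic t) := by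
      rw [← h2, Measure.map_apply measurable_snd measurableSet_Iic]; rfl
    have hint : ∫⁻ p, f p t ∂π = π ((A \ B) ∪ (B \ A)) := by
      have hcg : ∀ p : ℝ × ℝ, f p t = Set.indicator ((A \ B) ∪ (B \ A)) (fun _ => (1:ℝ≥0∞)) p := by
        intro p
        rw [Set.indicator_apply]
        refine if_congr ?_ rfl rfl
        simp [hA, hB, Set.mem_union, Set.mem_diff, mem_setOf_eq]
      rw [lintegral_congr hcg, lintegral_indicator ((hAm.diff hBm).union (hBm.diff hAm)),
        setLIntegral_one]
    rw [hint]
    have hcdfA : cdf μ t = (π A).toReal := by rw [hπA, cdf_eq_real, measureReal_def]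
    have hcdfB : cdf ν t = (π B).toReal := by rw [hπB, cdf_eq_real, measureReal_def]
    have key : ∀ X Y : Set (ℝ × ℝ), (π X).toReal - (π Y).toReal ≤ (π (X \ Y)).toReal := by
      intro X Y
      have hsub : X ⊆ Y ∪ (X \ Y) := fun p hp => by
        by_cases h : p ∈ Y
        · exact Or.inl h
        · exact Or.inr ⟨hp, h⟩
      have hle : π X ≤ π Y + π (X \ Y) := (measure_mono hsub).trans (measure_union_le _ _)
      have h1' := ENNReal.toReal_mono
        (ENNReal.add_ne_top.mpr ⟨measure_ne_top _ _, measure_ne_top _ _⟩) hle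
      rw [ENNReal.toReal_add (measure_ne_top _ _) (measure_ne_top _ _)] at h1'
      linarith
    rcases le_total (cdf ν t) (cdf μ t) with h | h
    · rw [abs_of_nonneg (by linarith), hcdfA, hcdfB]
      refine le_trans ?_ (measure_mono subset_union_left)
      rw [ENNReal.ofReal_le_iff_le_toReal (measure_ne_top _ _)]
      exact key A B
    · rw [abs_sub_comm, abs_of_nonneg (by linarith), hcdfA, hcdfB]
      refine le_trans ?_ (measure_mono subset_union_right)
      rw [ENNReal.ofReal_le_iff_le_toReal (measure_ne_top _ _)]
      exact key B A
  calc ∫⁻ t, ENNReal.ofReal |cdf μ t - cdf ν t|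
      ≤ ∫⁻ t, ∫⁻ p, f p t ∂π ∂volume := lintegral_mono hpt
    _ = ∫⁻ p, ∫⁻ t, f p t ∂volume ∂π := hswap.symm
    _ = ∫⁻ p, ENNReal.ofReal |p.1 - p.2| ∂π := lintegral_congr hstep1

lemma cost_ne_top {ν : Measure ℝ} [IsProbabilityMeasure ν] (π : Measure (ℝ × ℝ))
    [IsProbabilityMeasure π] (h1 : π.map Prod.fst = μ) (h2 : π.map Prod.snd = ν)
    (hμ : Integrable id μ) (hν : Integrable id ν) :
    ∫⁻ p, ENNReal.ofReal |p.1 - p.2| ∂π ≠ ⊤ := by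
  have hb : ∀ p : ℝ × ℝ,
      ENNReal.ofReal |p.1 - p.2| ≤ ENNReal.ofReal |p.1| + ENNReal.ofReal |p.2| := by
    intro p
    rw [← ENNReal.ofReal_add (abs_nonneg _) (abs_nonneg _)]
    refine ENNReal.ofReal_le_ofReal ?_
    calc |p.1 - p.2| = |p.1 + -p.2| := by rw [sub_eq_add_neg]
      _ ≤ |p.1| + |-p.2| := abs_add_le _ _
      _ = |p.1| + |p.2| := by rw [abs_neg]
  have hm1 : Measurable (fun p : ℝ × ℝ => ENNReal.ofReal |p.1|) :=
    measurable_fst.abs.ennreal_ofReal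
  have hm2 : Measurable (fun p : ℝ × ℝ => ENNReal.ofReal |p.2|) :=
    measurable_snd.abs.ennreal_ofReal
  have hfin : ∀ (ρ : Measure ℝ), Integrable id ρ → ∫⁻ x, ENNReal.ofReal |x| ∂ρ ≠ ⊤ := by
    intro ρ hρ
    have := hρ.hasFiniteIntegral
    rw [HasFiniteIntegral] at this
    refine ne_of_lt (lt_of_le_of_lt (le_of_eq ?_) this)
    refine lintegral_congr fun x => ?_
    rw [← Real.norm_eq_abs, ofReal_norm]
    rfl
  have hsum : ((∫⁻ p, ENNReal.ofReal |p.1| ∂π) + ∫⁻ p, ENNReal.ofReal |p.2| ∂π) ≠ ⊤ := by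
    refine ENNReal.add_ne_top.mpr ⟨?_, ?_⟩
    · rw [← lintegral_map (measurable_abs.ennreal_ofReal) measurable_fst, h1]
      exact hfin μ hμ
    · rw [← lintegral_map (measurable_abs.ennreal_ofReal) measurable_snd, h2]
      exact hfin ν hν
  exact ne_top_of_le_ne_top hsum ((lintegral_mono hb).trans_eq (lintegral_add_left hm1 _))


end Quantile

theorem wasserstein_eq_integral_cdf_diff (μ ν : Measure ℝ)
    [IsProbabilityMeasure μ] [IsProbabilityMeasure ν]
    (hμ : Integrable id μ) (hν : Integrable id ν) :
    W1 μ ν = ∫ t, |(μ (Set.Iic t)).toReal - (ν (Set.Iic t)).toReal| := by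
  classical
  set P := volume.restrict (Ioo (0:ℝ) 1) with hPdef
  have hPprob : IsProbabilityMeasure P := ⟨by simp [hPdef, Real.volume_Ioo]⟩
  set g : ℝ → ℝ × ℝ := fun u => (qf μ u, qf ν u) with hg
  have hgm : AEMeasurable g P := (qf_aemeasurable).prodMk (qf_aemeasurable)
  set π₀ := P.map g with hπ₀
  have hπ₀prob : IsProbabilityMeasure π₀ := Measure.isProbabilityMeasure_map hgm
  have hfst : π₀.map Prod.fst = μ := by
    rw [hπ₀, AEMeasurable.map_map_of_aemeasurable measurable_fst.aemeasurable hgm]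
    exact map_qf
  have hsnd : π₀.map Prod.snd = ν := by
    rw [hπ₀, AEMeasurable.map_map_of_aemeasurable measurable_snd.aemeasurable hgm]
    exact map_qf
  set D := ∫⁻ t, ENNReal.ofReal |cdf μ t - cdf ν t| with hD
  have hcostmeas : Measurable (fun p : ℝ × ℝ => ENNReal.ofReal |p.1 - p.2|) :=
    ((measurable_fst.sub measurable_snd).abs).ennreal_ofReal
  have hcost0 : ∫⁻ p, ENNReal.ofReal |p.1 - p.2| ∂π₀ = D := by
    rw [hπ₀, lintegral_map' hcostmeas.aemeasurable hgm]
    exact qcost_eq ν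
  have hDne : D ≠ ⊤ := by
    rw [← hcost0]
    exact cost_ne_top π₀ hfst hsnd hμ hν
  have hreal : ∀ π : Measure (ℝ × ℝ), IsProbabilityMeasure π →
      ∫ p, ‖p.1 - p.2‖ ∂π = (∫⁻ p, ENNReal.ofReal |p.1 - p.2| ∂π).toReal := by
    intro π _
    rw [integral_eq_lintegral_of_nonneg_ae (Filter.Eventually.of_forall fun p => norm_nonneg _)
      ((measurable_fst.sub measurable_snd).norm.aestronglyMeasurable)]
    congr 1
  have hRHS : ∫ t, |(μ (Set.Iic t)).toReal - (ν (Set.Iic t)).toReal| = D.toReal := by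
    have hfun : (fun t => |(μ (Set.Iic t)).toReal - (ν (Set.Iic t)).toReal|)
        = fun t => |cdf μ t - cdf ν t| :=
      funext fun t => by rw [cdf_eq_real, cdf_eq_real, measureReal_def, measureReal_def]
    have hmeas : Measurable fun t => |cdf μ t - cdf ν t| :=
      (((monotone_cdf μ).measurable).sub ((monotone_cdf ν).measurable)).abs
    rw [hfun, integral_eq_lintegral_of_nonneg_ae
      (Filter.Eventually.of_forall fun t => abs_nonneg _) hmeas.aestronglyMeasurable, hD]
  rw [W1, hRHS]
  apply le_antisymm
  · refine csInf_le ⟨0, fun r hr => ?_⟩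
      ⟨π₀, hπ₀prob, hfst, hsnd, by rw [hreal π₀ hπ₀prob, hcost0]⟩
    obtain ⟨π, hπ, -, -, hr⟩ := hr
    rw [hr]
    exact integral_nonneg fun p => norm_nonneg _
  · refine le_csInf ⟨_, π₀, hπ₀prob, hfst, hsnd, rfl⟩ ?_
    rintro r ⟨π, hπprob, hf, hs, rfl⟩
    rw [hreal π hπprob]
    exact ENNReal.toReal_mono (cost_ne_top π hf hs hμ hν) (cost_ge ν π hf hs)
end

section
/- Let f : [0,1] → ℝ be piecewise affine with N_A pieces. Then the cumulative distribution function of the pushforward f#U([0,1]) of the uniform distribution on [0,1] is a piecewise affine function with at most N_A + 2 affine pieces. -/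
open MeasureTheory

lemma vol_affine_piece (u v p q : ℝ) (huv : u ≤ v) (su sv : Prop) :
    ∃ p' q' : ℝ, ∀ t : ℝ, ((p*u+q ≤ t) ↔ su) → ((p*v+q ≤ t) ↔ sv) →
      (volume ({x : ℝ | p*x+q ≤ t} ∩ Set.Ico u v)).toReal = p' * t + q' := by
  rcases lt_trichotomy p 0 with hp | hp | hp
  · -- p < 0
    by_cases hsv : sv
    · by_cases hsu : su
      · refine ⟨0, v - u, fun t h1 h2 => ?_⟩
        have h1' : p*u+q ≤ t := h1.mpr hsu
        have hset : {x : ℝ | p*x+q ≤ t} ∩ Set.Ico u v = Set.Ico u v := by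
          apply Set.inter_eq_self_of_subset_right
          intro x hx
          have : p * x ≤ p * u := (mul_le_mul_left_of_neg hp).mpr hx.1
          show p * x + q ≤ t; linarith
        rw [hset, Real.volume_Ico, ENNReal.toReal_ofReal (by linarith)]; ring
      · refine ⟨-(1/p), v + q/p, fun t h1 h2 => ?_⟩
        have h1' : ¬ (p*u+q ≤ t) := fun h => hsu (h1.mp h)
        have h1'' : t < p*u+q := lt_of_not_ge h1'
        have h2' : p*v+q ≤ t := h2.mpr hsv
        have hp0 : p ≠ 0 := by intro h; simp [h] at hp
        set c := (t - q)/p with hcdef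
        have hc : p * c + q = t := by rw [hcdef]; field_simp; ring
        have hcu : u < c := by
          by_contra hcon
          have : p * u ≤ p * c := (mul_le_mul_left_of_neg hp).mpr (le_of_not_gt hcon)
          linarith
        have hcv : c ≤ v := by
          have : p * v ≤ p * c := by linarith
          exact (mul_le_mul_left_of_neg hp).mp this
        have hset : {x : ℝ | p*x+q ≤ t} ∩ Set.Ico u v = Set.Ico c v := by
          ext x
          simp only [Set.mem_inter_iff, Set.mem_setOf_eq, Set.mem_Ico]
          constructor
          · rintro ⟨hx, _, hxv⟩
            refine ⟨?_, hxv⟩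
            have : p * x ≤ p * c := by linarith
            exact (mul_le_mul_left_of_neg hp).mp this
          · rintro ⟨hcx, hxv⟩
            have : p * x ≤ p * c := (mul_le_mul_left_of_neg hp).mpr hcx
            exact ⟨by linarith, le_trans hcu.le hcx, hxv⟩
        rw [hset, Real.volume_Ico, ENNReal.toReal_ofReal (by linarith)]
        rw [hcdef]; field_simp; ring
    · refine ⟨0, 0, fun t h1 h2 => ?_⟩
      have h2' : t < p*v+q := lt_of_not_ge (fun h => hsv (h2.mp h))
      have hset : {x : ℝ | p*x+q ≤ t} ∩ Set.Ico u v = ∅ := by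
        ext x
        simp only [Set.mem_inter_iff, Set.mem_setOf_eq, Set.mem_Ico, Set.mem_empty_iff_false,
          iff_false, not_and]
        intro hx hu hv
        have : p * v ≤ p * x := by nlinarith
        linarith
      rw [hset]; simp
  · -- p = 0
    subst hp
    by_cases hsu : su
    · refine ⟨0, v - u, fun t h1 h2 => ?_⟩
      have h1' : 0*u+q ≤ t := h1.mpr hsu
      have hset : {x : ℝ | 0*x+q ≤ t} ∩ Set.Ico u v = Set.Ico u v := by
        apply Set.inter_eq_self_of_subset_right
        intro x _
        show 0 * x + q ≤ t; linarith
      rw [hset, Real.volume_Ico, ENNReal.toReal_ofReal (by linarith)]; ring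
    · refine ⟨0, 0, fun t h1 h2 => ?_⟩
      have h1' : t < 0*u+q := lt_of_not_ge (fun h => hsu (h1.mp h))
      have hset : {x : ℝ | 0*x+q ≤ t} ∩ Set.Ico u v = ∅ := by
        ext x
        simp only [Set.mem_inter_iff, Set.mem_setOf_eq, Set.mem_empty_iff_false, iff_false,
          not_and]
        intro hx
        exfalso; linarith [hx]
      rw [hset]; simp
  · -- p > 0
    by_cases hsu : su
    · by_cases hsv : sv
      · refine ⟨0, v - u, fun t h1 h2 => ?_⟩
        have h2' : p*v+q ≤ t := h2.mpr hsv
        have hset : {x : ℝ | p*x+q ≤ t} ∩ Set.Ico u v = Set.Ico u v := by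
          apply Set.inter_eq_self_of_subset_right
          intro x hx
          have : p * x ≤ p * v := (mul_le_mul_iff_right₀ hp).mpr hx.2.le
          show p * x + q ≤ t; linarith
        rw [hset, Real.volume_Ico, ENNReal.toReal_ofReal (by linarith)]; ring
      · refine ⟨1/p, -(q/p) - u, fun t h1 h2 => ?_⟩
        have h1' : p*u+q ≤ t := h1.mpr hsu
        have h2' : t < p*v+q := lt_of_not_ge (fun h => hsv (h2.mp h))
        have hp0 : p ≠ 0 := by intro h; simp [h] at hp
        set c := (t - q)/p with hcdef
        have hc : p * c + q = t := by rw [hcdef]; field_simp; ring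
        have hcu : u ≤ c := by
          have : p * u ≤ p * c := by linarith
          exact (mul_le_mul_iff_right₀ hp).mp this
        have hcv : c < v := by
          by_contra hcon
          have : p * v ≤ p * c := (mul_le_mul_iff_right₀ hp).mpr (le_of_not_gt hcon)
          linarith
        have hset : {x : ℝ | p*x+q ≤ t} ∩ Set.Ico u v = Set.Icc u c := by
          ext x
          simp only [Set.mem_inter_iff, Set.mem_setOf_eq, Set.mem_Ico, Set.mem_Icc]
          constructor
          · rintro ⟨hx, hux, _⟩
            refine ⟨hux, ?_⟩
            have : p * x ≤ p * c := by linarith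
            exact (mul_le_mul_iff_right₀ hp).mp this
          · rintro ⟨hux, hxc⟩
            have : p * x ≤ p * c := (mul_le_mul_iff_right₀ hp).mpr hxc
            exact ⟨by linarith, hux, lt_of_le_of_lt hxc hcv⟩
        rw [hset, Real.volume_Icc, ENNReal.toReal_ofReal (by linarith)]
        rw [hcdef]; field_simp; ring
    · refine ⟨0, 0, fun t h1 h2 => ?_⟩
      have h1' : t < p*u+q := lt_of_not_ge (fun h => hsu (h1.mp h))
      have hset : {x : ℝ | p*x+q ≤ t} ∩ Set.Ico u v = ∅ := by
        ext x
        simp only [Set.mem_inter_iff, Set.mem_setOf_eq, Set.mem_Ico, Set.mem_empty_iff_false,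
          iff_false, not_and]
        intro hx hu hv
        have : p * u ≤ p * x := (mul_le_mul_iff_right₀ hp).mpr hu
        linarith
      rw [hset]; simp

theorem pushforward_cdf_piecewise_affine (NA : ℕ) (hNA : 0 < NA)
    (f : ℝ → ℝ) (hf : Measurable f)
    (a : Fin (NA + 1) → ℝ) (ha : Monotone a)
    (h0 : a 0 = 0) (h1 : a (Fin.last NA) = 1)
    (haff : ∀ i : Fin NA, ∃ p q : ℝ,
      ∀ x ∈ Set.Icc (a i.castSucc) (a i.succ), f x = p * x + q) :
    ∃ pieces : Fin (NA + 2) → Set ℝ,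
      (⋃ i, pieces i) = Set.univ ∧
      (∀ i, (pieces i).OrdConnected) ∧
      (∀ i, ∃ p q : ℝ, ∀ t ∈ pieces i,
        (((volume.restrict (Set.Icc (0 : ℝ) 1)).map f) (Set.Iic t)).toReal
          = p * t + q) := by
  classical
  choose P Q hPQ using haff
  set cnt : ℝ → ℕ := fun t => (Finset.univ.filter (fun i : Fin (NA+1) => f (a i) ≤ t)).card
    with hcnt
  have cnt_mono : Monotone cnt := by
    intro t t' htt'
    refine Finset.card_le_card ?_
    intro i hi
    simp only [Finset.mem_filter] at hi ⊢
    exact ⟨hi.1, le_trans hi.2 htt'⟩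
  have cnt_le : ∀ t, cnt t ≤ NA + 1 := by
    intro t
    calc cnt t ≤ (Finset.univ : Finset (Fin (NA+1))).card := Finset.card_filter_le _ _
      _ = NA + 1 := by simp
  have key : ∀ (j : Fin (NA+2)) (t t' : ℝ), cnt t = (j : ℕ) → cnt t' = (j : ℕ) →
      ∀ i : Fin (NA+1), (f (a i) ≤ t ↔ f (a i) ≤ t') := by
    have main : ∀ (t t' : ℝ), t ≤ t' → cnt t = cnt t' →
        ∀ i : Fin (NA+1), (f (a i) ≤ t ↔ f (a i) ≤ t') := by
      intro t t' htt' hc i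
      have hsub : Finset.univ.filter (fun i : Fin (NA+1) => f (a i) ≤ t) ⊆
          Finset.univ.filter (fun i : Fin (NA+1) => f (a i) ≤ t') := by
        intro i hi
        simp only [Finset.mem_filter] at hi ⊢
        exact ⟨hi.1, le_trans hi.2 htt'⟩
      have heq := Finset.eq_of_subset_of_card_le hsub (le_of_eq hc.symm)
      constructor
      · intro h; exact le_trans h htt'
      · intro h
        have hm : i ∈ Finset.univ.filter (fun i : Fin (NA+1) => f (a i) ≤ t') :=
          Finset.mem_filter.mpr ⟨Finset.mem_univ _, h⟩
        rw [← heq] at hm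
        exact (Finset.mem_filter.mp hm).2
    intro j t t' h h' i
    rcases le_total t t' with hle | hle
    · exact main t t' hle (by rw [h, h']) i
    · exact (main t' t hle (by rw [h, h']) i).symm
  refine ⟨fun j => {t | cnt t = (j : ℕ)}, ?_, ?_, ?_⟩
  · ext t
    simp only [Set.mem_iUnion, Set.mem_univ, iff_true]
    exact ⟨⟨cnt t, by have := cnt_le t; omega⟩, rfl⟩
  · intro j
    constructor
    intro t1 ht1 t2 ht2 t ht
    have hle1 : cnt t1 ≤ cnt t := cnt_mono ht.1
    have hle2 : cnt t ≤ cnt t2 := cnt_mono ht.2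
    simp only [Set.mem_setOf_eq] at ht1 ht2 ⊢
    omega
  · intro j
    by_cases hne : ∃ t0, cnt t0 = (j : ℕ)
    swap
    · exact ⟨0, 0, fun t ht => absurd ⟨t, ht⟩ hne⟩
    obtain ⟨t0, ht0⟩ := hne
    have hchoice : ∀ i : Fin NA, ∃ p' q' : ℝ, ∀ t : ℝ, cnt t = (j : ℕ) →
        (volume ({x : ℝ | P i * x + Q i ≤ t} ∩
          Set.Ico (a i.castSucc) (a i.succ))).toReal = p' * t + q' := by
      intro i
      have huv : a i.castSucc ≤ a i.succ := ha (Fin.castSucc_lt_succ : i.castSucc < i.succ).le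
      obtain ⟨p', q', hp'⟩ := vol_affine_piece (a i.castSucc) (a i.succ) (P i) (Q i) huv
        (f (a i.castSucc) ≤ t0) (f (a i.succ) ≤ t0)
      refine ⟨p', q', fun t ht => hp' t ?_ ?_⟩
      · rw [← hPQ i _ ⟨le_refl _, huv⟩]; exact key j t t0 ht ht0 i.castSucc
      · rw [← hPQ i _ ⟨huv, le_refl _⟩]; exact key j t t0 ht ht0 i.succ
    choose pp qq hpp using hchoice
    refine ⟨∑ i, pp i, ∑ i, qq i, fun t ht => ?_⟩
    simp only [Set.mem_setOf_eq] at ht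
    have hTmeas : MeasurableSet (f ⁻¹' Set.Iic t) := hf measurableSet_Iic
    have step1 : ((volume.restrict (Set.Icc (0 : ℝ) 1)).map f) (Set.Iic t)
        = volume (f ⁻¹' Set.Iic t ∩ Set.Icc 0 1) := by
      rw [Measure.map_apply hf measurableSet_Iic, Measure.restrict_apply hTmeas]
    have step2 : volume (f ⁻¹' Set.Iic t ∩ Set.Icc 0 1)
        = volume (f ⁻¹' Set.Iic t ∩ Set.Ico 0 1) := by
      refine measure_congr ?_
      exact Filter.EventuallyEq.inter (Filter.EventuallyEq.refl _ _) Ico_ae_eq_Icc.symm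
    have hIco : Set.Ico (0:ℝ) 1 = ⋃ i : Fin NA, Set.Ico (a i.castSucc) (a i.succ) := by
      ext x
      simp only [Set.mem_Ico, Set.mem_iUnion]
      constructor
      · rintro ⟨hx0, hx1⟩
        have hnefil : (Finset.univ.filter (fun i : Fin (NA+1) => a i ≤ x)).Nonempty :=
          ⟨0, Finset.mem_filter.mpr ⟨Finset.mem_univ _, by rw [h0]; exact hx0⟩⟩
        set i0 := Finset.max' _ hnefil with hi0
        have hi0mem := Finset.max'_mem _ hnefil
        have hi0le : a i0 ≤ x := (Finset.mem_filter.mp hi0mem).2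
        have hi0lt : (i0 : ℕ) < NA := by
          by_contra hcon
          have hlast : i0 = Fin.last NA := by
            apply Fin.ext
            have := i0.isLt
            simp only [Fin.val_last]
            omega
          rw [hlast, h1] at hi0le; linarith
        refine ⟨⟨(i0 : ℕ), hi0lt⟩, ?_, ?_⟩
        · have hcs : (⟨(i0 : ℕ), hi0lt⟩ : Fin NA).castSucc = i0 := by
            apply Fin.ext; simp
          rw [hcs]; exact hi0le
        · by_contra hcon
          push_neg at hcon
          have hmem : (⟨(i0 : ℕ), hi0lt⟩ : Fin NA).succ ∈
              Finset.univ.filter (fun i : Fin (NA+1) => a i ≤ x) :=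
            Finset.mem_filter.mpr ⟨Finset.mem_univ _, hcon⟩
          have hle := Finset.le_max' _ _ hmem
          rw [← hi0] at hle
          rw [Fin.le_def] at hle
          simp at hle
      · rintro ⟨i, hl, hr⟩
        constructor
        · calc (0:ℝ) = a 0 := h0.symm
            _ ≤ a i.castSucc := ha (Fin.zero_le _)
            _ ≤ x := hl
        · calc x < a i.succ := hr
            _ ≤ a (Fin.last NA) := ha (Fin.le_last _)
            _ = 1 := h1
    have hdisj : Pairwise (Function.onFun Disjoint
        (fun i : Fin NA => f ⁻¹' Set.Iic t ∩ Set.Ico (a i.castSucc) (a i.succ))) := by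
      have hIcoDisj : ∀ i i' : Fin NA, i < i' →
          Disjoint (Set.Ico (a i.castSucc) (a i.succ)) (Set.Ico (a i'.castSucc) (a i'.succ)) := by
        intro i i' h
        rw [Set.disjoint_left]
        intro x hx hx'
        have hmid : a i.succ ≤ a i'.castSucc := by
          apply ha
          rw [Fin.le_def]
          rw [Fin.lt_def] at h
          simp only [Fin.val_succ, Fin.coe_castSucc]
          omega
        have := hx.2
        have := hx'.1
        linarith
      intro i i' hii'
      rcases hii'.lt_or_gt with h | h
      · exact Set.disjoint_of_subset Set.inter_subset_right Set.inter_subset_right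
          (hIcoDisj i i' h)
      · exact Set.disjoint_of_subset Set.inter_subset_right Set.inter_subset_right
          (hIcoDisj i' i h).symm
    have hmeasi : ∀ i : Fin NA,
        MeasurableSet (f ⁻¹' Set.Iic t ∩ Set.Ico (a i.castSucc) (a i.succ)) :=
      fun i => hTmeas.inter measurableSet_Ico
    have step3 : volume (f ⁻¹' Set.Iic t ∩ Set.Ico 0 1)
        = ∑ i : Fin NA, volume (f ⁻¹' Set.Iic t ∩ Set.Ico (a i.castSucc) (a i.succ)) := by
      rw [hIco, Set.inter_iUnion, measure_iUnion hdisj hmeasi, tsum_fintype]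
    have hseteq : ∀ i : Fin NA, f ⁻¹' Set.Iic t ∩ Set.Ico (a i.castSucc) (a i.succ)
        = {x : ℝ | P i * x + Q i ≤ t} ∩ Set.Ico (a i.castSucc) (a i.succ) := by
      intro i
      ext x
      simp only [Set.mem_inter_iff, Set.mem_preimage, Set.mem_Iic, Set.mem_setOf_eq,
        and_congr_left_iff]
      intro hx
      rw [hPQ i x (Set.Ico_subset_Icc_self hx)]
    have hfin : ∀ i : Fin NA,
        volume ({x : ℝ | P i * x + Q i ≤ t} ∩ Set.Ico (a i.castSucc) (a i.succ)) ≠ ⊤ := by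
      intro i
      refine ne_of_lt (lt_of_le_of_lt (measure_mono Set.inter_subset_right) ?_)
      rw [Real.volume_Ico]; exact ENNReal.ofReal_lt_top
    calc (((volume.restrict (Set.Icc (0 : ℝ) 1)).map f) (Set.Iic t)).toReal
        = (∑ i : Fin NA, volume ({x : ℝ | P i * x + Q i ≤ t} ∩
            Set.Ico (a i.castSucc) (a i.succ))).toReal := by
          rw [step1, step2, step3]
          congr 1
          exact Finset.sum_congr rfl (fun i _ => by rw [hseteq i])
      _ = ∑ i : Fin NA, (volume ({x : ℝ | P i * x + Q i ≤ t} ∩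
            Set.Ico (a i.castSucc) (a i.succ))).toReal :=
          ENNReal.toReal_sum (fun i _ => hfin i)
      _ = ∑ i : Fin NA, (pp i * t + qq i) :=
          Finset.sum_congr rfl (fun i _ => hpp i t ht)
      _ = (∑ i, pp i) * t + ∑ i, qq i := by
          rw [Finset.sum_add_distrib, ← Finset.sum_mul]
end

section
/- Let Φ be the standard normal CDF, a < b reals with Φ''(x) bounded away from zero in absolute value on a subinterval of [a,b]. Then there is a constant K > 0 such that for every piecewise affine function f : [a,b] → ℝ with N_A affine pieces, ∫_a^b |Φ(x) − f(x)| dx ≥ K / N_A^4. -/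
open MeasureTheory

/-- The standard normal CDF. -/
noncomputable def Phi (z : ℝ) : ℝ :=
  (Real.sqrt (2 * Real.pi))⁻¹ * ∫ t in Set.Iic z, Real.exp (-t ^ 2 / 2)

lemma gauss_integrable : MeasureTheory.Integrable (fun t : ℝ => Real.exp (-t ^ 2 / 2)) := by
  have := integrable_exp_neg_mul_sq (b := (1:ℝ)/2) (by norm_num)
  convert this using 2 with t
  ring_nf

lemma Phi_hasDeriv (z : ℝ) :
    HasDerivAt Phi ((Real.sqrt (2 * Real.pi))⁻¹ * Real.exp (-z ^ 2 / 2)) z := by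
  have hg := gauss_integrable
  have key : ∀ x : ℝ, Phi x = (Real.sqrt (2 * Real.pi))⁻¹ *
      ((∫ t in Set.Iic (0:ℝ), Real.exp (-t ^ 2 / 2)) + ∫ t in (0:ℝ)..x, Real.exp (-t ^ 2 / 2)) := by
    intro x
    have := intervalIntegral.integral_Iic_sub_Iic (f := fun t : ℝ => Real.exp (-t ^ 2 / 2))
      (μ := volume) (a := (0:ℝ)) (b := x) hg.integrableOn hg.integrableOn
    unfold Phi
    rw [← this]; ring
  have h1 : HasDerivAt (fun x => ∫ t in (0:ℝ)..x, Real.exp (-t ^ 2 / 2))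
      (Real.exp (-z ^ 2 / 2)) z :=
    intervalIntegral.integral_hasDerivAt_right hg.intervalIntegrable
      hg.aestronglyMeasurable.stronglyMeasurableAtFilter
      (by fun_prop)
  have h2 := (h1.const_add (∫ t in Set.Iic (0:ℝ), Real.exp (-t ^ 2 / 2))).const_mul
      ((Real.sqrt (2 * Real.pi))⁻¹)
  refine HasDerivAt.congr_of_eventuallyEq ?_ (Filter.Eventually.of_forall key)
  simpa using h2

lemma Phi_deriv : deriv Phi = fun z => (Real.sqrt (2 * Real.pi))⁻¹ * Real.exp (-z ^ 2 / 2) :=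
  funext fun z => (Phi_hasDeriv z).deriv

lemma Phi_deriv_hasDeriv (z : ℝ) :
    HasDerivAt (deriv Phi) ((Real.sqrt (2 * Real.pi))⁻¹ * (-z * Real.exp (-z ^ 2 / 2))) z := by
  rw [Phi_deriv]
  have h : HasDerivAt (fun x : ℝ => Real.exp (-x ^ 2 / 2))
      (Real.exp (-z ^ 2 / 2) * (-(2 * z ^ 1) / 2)) z :=
    (((hasDerivAt_pow 2 z).neg).div_const 2).exp
  have h2 := h.const_mul ((Real.sqrt (2 * Real.pi))⁻¹)
  refine h2.congr_deriv ?_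
  ring

lemma Phi_deriv2 (z : ℝ) :
    deriv (deriv Phi) z = (Real.sqrt (2 * Real.pi))⁻¹ * (-z * Real.exp (-z ^ 2 / 2)) :=
  (Phi_deriv_hasDeriv z).deriv

lemma midpoint_conv (δ u v ε : ℝ) (hδ : 0 < δ)
    (h2 : ∀ x ∈ Set.Icc u v, δ ≤ ε * deriv (deriv Phi) x) :
    ∀ p ∈ Set.Icc u v, ∀ r ∈ Set.Icc u v,
      δ * ((r - p) / 2) ^ 2 ≤ ε * Phi p + ε * Phi r - 2 * (ε * Phi ((p + r) / 2)) := by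
  set G : ℝ → ℝ := fun x => ε * Phi x - δ / 2 * x ^ 2 with hGdef
  have hGd : ∀ x : ℝ, HasDerivAt G (ε * deriv Phi x - δ / 2 * (2 * x ^ 1)) x := by
    intro x
    have := ((Phi_hasDeriv x).const_mul ε).sub ((hasDerivAt_pow 2 x).const_mul (δ / 2))
    exact this.congr_deriv (by simp [Phi_deriv])
  have hderivG : deriv G = fun x => ε * deriv Phi x - δ / 2 * (2 * x ^ 1) :=
    funext fun x => (hGd x).deriv
  have hGd2 : ∀ x : ℝ, HasDerivAt (deriv G) (ε * deriv (deriv Phi) x - δ) x := by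
    intro x
    rw [hderivG]
    have := ((Phi_deriv_hasDeriv x).const_mul ε).sub
      (((hasDerivAt_pow 1 x).const_mul 2).const_mul (δ / 2))
    rw [Phi_deriv2]
    refine this.congr_deriv ?_
    norm_num
  have hconv : ConvexOn ℝ (Set.Icc u v) G := by
    apply convexOn_of_deriv2_nonneg' (convex_Icc u v)
    · exact fun x _ => (hGd x).differentiableAt.differentiableWithinAt
    · exact fun x _ => (hGd2 x).differentiableAt.differentiableWithinAt
    · intro x hx
      have : deriv^[2] G x = deriv (deriv G) x := by
        simp [Function.iterate_succ_apply']
      rw [this, (hGd2 x).deriv]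
      have := h2 x hx
      linarith
  intro p hp r hr
  have key := hconv.2 hp hr (by norm_num : (0:ℝ) ≤ 1/2) (by norm_num : (0:ℝ) ≤ 1/2)
    (by norm_num : (1:ℝ)/2 + 1/2 = 1)
  simp only [smul_eq_mul, hGdef] at key
  have hq : 1/2 * p + 1/2 * r = (p + r)/2 := by ring
  rw [hq] at key
  nlinarith [key]

lemma key_integral (δ s L : ℝ) (hδ : 0 < δ) (hL : 0 < L) (w : ℝ → ℝ)
    (hw : MeasureTheory.IntegrableOn w (Set.Icc s (s + L)))
    (hconv : ∀ x ∈ Set.Icc s (s + L/2),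
      δ * (L/4)^2 ≤ w x + w (x + L/2) - 2 * w (x + L/4)) :
    δ * L^3 / 128 ≤ ∫ x in s..(s+L), |w x| := by
  have hwabs : MeasureTheory.IntegrableOn (fun x => |w x|) (Set.Icc s (s + L)) := hw.abs
  have hII : IntervalIntegrable (fun x => |w x|) volume s (s + L) := by
    rw [intervalIntegrable_iff_integrableOn_Ioc_of_le (by linarith)]
    exact hwabs.mono_set Set.Ioc_subset_Icc_self
  set I := ∫ x in s..(s+L), |w x| with hI
  have hmono : ∀ c d : ℝ, s ≤ c → c ≤ d → d ≤ s + L → (∫ x in c..d, |w x|) ≤ I := by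
    intro c d h1 h2 h3
    exact intervalIntegral.integral_mono_interval h1 h2 h3
      (Filter.Eventually.of_forall fun x => abs_nonneg _) hII
  -- integrability of shifted functions on [s, s+L/2]
  have hsub : ∀ c d : ℝ, s ≤ c → c ≤ d → d ≤ s + L →
      IntervalIntegrable (fun x => |w x|) volume c d := by
    intro c d h1 h2 h3
    rw [intervalIntegrable_iff_integrableOn_Ioc_of_le h2]
    exact hwabs.mono_set ((Set.Ioc_subset_Icc_self).trans (Set.Icc_subset_Icc h1 h3))
  have hL4 : (0:ℝ) < L/4 := by linarith
  have e2 : IntervalIntegrable (fun x => |w (x + L/2)|) volume s (s + L/2) := by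
    have h0 := (hsub (s + L/2) (s + L) (by linarith) (by linarith)
      (by linarith)).comp_add_right (L/2)
    have h' : s + L/2 - L/2 = s := by ring
    have h'' : s + L - L/2 = s + L/2 := by ring
    rwa [h', h''] at h0
  have e3 : IntervalIntegrable (fun x => |w (x + L/4)|) volume s (s + L/2) := by
    have h0 := (hsub (s + L/4) (s + 3*L/4) (by linarith) (by linarith)
      (by linarith)).comp_add_right (L/4)
    have h' : s + L/4 - L/4 = s := by ring
    have h'' : s + 3*L/4 - L/4 = s + L/2 := by ring
    rwa [h', h''] at h0
  have e1 : IntervalIntegrable (fun x => |w x|) volume s (s + L/2) :=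
    hsub s (s + L/2) le_rfl (by linarith) (by linarith)
  have step1 : δ * (L/4)^2 * (L/2) ≤
      ∫ x in s..(s + L/2), (|w x| + |w (x + L/2)| + 2 * |w (x + L/4)|) := by
    have hc : (∫ _x in s..(s + L/2), δ * (L/4)^2) = δ * (L/4)^2 * (L/2) := by
      simp; ring
    rw [← hc]
    apply intervalIntegral.integral_mono_on (by linarith)
      (intervalIntegrable_const) ((e1.add e2).add (e3.const_mul 2))
    intro x hx
    have h := hconv x hx
    have b1 : w x ≤ |w x| := le_abs_self _
    have b2 : w (x + L/2) ≤ |w (x + L/2)| := le_abs_self _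
    have b3 : -(w (x + L/4)) ≤ |w (x + L/4)| := neg_le_abs _
    linarith
  have split : (∫ x in s..(s + L/2), (|w x| + |w (x + L/2)| + 2 * |w (x + L/4)|)) =
      (∫ x in s..(s + L/2), |w x|) + (∫ x in s..(s + L/2), |w (x + L/2)|)
        + 2 * ∫ x in s..(s + L/2), |w (x + L/4)| := by
    rw [intervalIntegral.integral_add (e1.add e2) (e3.const_mul 2),
      intervalIntegral.integral_add e1 e2, intervalIntegral.integral_const_mul]
  have sh2 : (∫ x in s..(s + L/2), |w (x + L/2)|) = ∫ x in (s + L/2)..(s + L), |w x| := by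
    rw [intervalIntegral.integral_comp_add_right (fun x => |w x|) (L/2)]
    congr 1 <;> ring
  have sh3 : (∫ x in s..(s + L/2), |w (x + L/4)|) = ∫ x in (s + L/4)..(s + 3*L/4), |w x| := by
    rw [intervalIntegral.integral_comp_add_right (fun x => |w x|) (L/4)]
    congr 1 <;> ring
  have m1 := hmono s (s + L/2) le_rfl (by linarith) (by linarith)
  have m2 := hmono (s + L/2) (s + L) (by linarith) (by linarith) (by linarith)
  have m3 := hmono (s + L/4) (s + 3*L/4) (by linarith) (by linarith) (by linarith)
  rw [split, sh2, sh3] at step1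
  nlinarith [step1]

lemma exists_big_piece (NA : ℕ) (hNA : 0 < NA) (u v : ℝ) (huv : u < v)
    (q : Fin (NA+1) → ℝ) (hq0 : q 0 = u) (hqL : q (Fin.last NA) = v) :
    ∃ i : Fin NA, (v - u) / NA ≤ q i.succ - q i.castSucc := by
  by_contra hcon
  push_neg at hcon
  set Q : ℕ → ℝ := fun n => if h : n < NA + 1 then q ⟨n, h⟩ else v with hQ
  have tele : ∑ i ∈ Finset.range NA, (Q (i+1) - Q i) = Q NA - Q 0 := Finset.sum_range_sub Q NA
  have hQNA : Q NA = v := by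
    simp only [hQ, dif_pos (Nat.lt_succ_self NA)]
    rw [show (⟨NA, Nat.lt_succ_self NA⟩ : Fin (NA+1)) = Fin.last NA from rfl, hqL]
  have hQ0 : Q 0 = u := by
    simp only [hQ, dif_pos (Nat.succ_pos NA)]
    rw [show (⟨0, Nat.succ_pos NA⟩ : Fin (NA+1)) = 0 from rfl, hq0]
  have hterm : ∀ i : Fin NA, Q (i.val + 1) - Q i.val = q i.succ - q i.castSucc := by
    intro i
    have h1 : i.val + 1 < NA + 1 := Nat.succ_lt_succ i.isLt
    have h2 : i.val < NA + 1 := Nat.lt_succ_of_lt i.isLt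
    simp only [hQ, dif_pos h1, dif_pos h2]
    congr 1
  have hsum : ∑ i ∈ Finset.range NA, (Q (i+1) - Q i) < NA * ((v - u) / NA) := by
    rw [← Fin.sum_univ_eq_sum_range (fun i => Q (i+1) - Q i) NA]
    calc ∑ i : Fin NA, (Q (i.val+1) - Q i.val) = ∑ i : Fin NA, (q i.succ - q i.castSucc) :=
          Finset.sum_congr rfl fun i _ => hterm i
      _ < ∑ _i : Fin NA, ((v - u) / NA) := by
          apply Finset.sum_lt_sum_of_nonempty
          · exact Finset.univ_nonempty_iff.mpr (Fin.pos_iff_nonempty.mp hNA)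
          · exact fun i _ => hcon i
      _ = NA * ((v - u) / NA) := by simp [mul_comm]
  rw [tele, hQNA, hQ0] at hsum
  have hNA' : (NA : ℝ) ≠ 0 := Nat.cast_ne_zero.mpr hNA.ne'
  rw [mul_div_cancel₀ _ hNA'] at hsum
  exact lt_irrefl _ hsum

lemma cover_piece (NA : ℕ) (hNA : 0 < NA) (pts : Fin (NA+1) → ℝ) (hmono : Monotone pts)
    {x : ℝ} (hx : x ∈ Set.Icc (pts 0) (pts (Fin.last NA))) :
    ∃ i : Fin NA, x ∈ Set.Icc (pts i.castSucc) (pts i.succ) := by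
  classical
  set S : Finset (Fin (NA+1)) := Finset.univ.filter (fun j => pts j ≤ x) with hS
  have h0S : (0 : Fin (NA+1)) ∈ S := by
    simp [hS, hx.1]
  have hSne : S.Nonempty := ⟨0, h0S⟩
  set j := S.max' hSne with hj
  have hjmem : pts j ≤ x := by
    have := S.max'_mem hSne
    simpa [hS] using this
  rcases lt_or_eq_of_le (Nat.lt_succ_iff.mp j.isLt) with hlt | heq
  · refine ⟨⟨j.val, hlt⟩, ?_, ?_⟩
    · have : (Fin.castSucc ⟨j.val, hlt⟩ : Fin (NA+1)) = j := by
        ext; simp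
      rw [this]; exact hjmem
    · by_contra hc
      push_neg at hc
      have hmem : (Fin.succ (⟨j.val, hlt⟩ : Fin NA)) ∈ S := by
        simp only [hS, Finset.mem_filter, Finset.mem_univ, true_and]
        exact hc.le
      have hle := S.le_max' _ hmem
      rw [← hj] at hle
      have : j.val + 1 ≤ j.val := hle
      omega
  · -- j = last, so x = pts last = b
    have hjl : j = Fin.last NA := by ext; simpa using heq
    have hxb : x = pts (Fin.last NA) := le_antisymm hx.2 (hjl ▸ hjmem)
    refine ⟨⟨NA - 1, by omega⟩, ?_, ?_⟩
    · exact (hmono (Fin.le_last _)).trans hxb.ge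
    · refine hxb.le.trans ?_
      apply hmono
      rw [Fin.le_def]
      simp [Fin.last]
      omega

lemma f_integrable (NA : ℕ) (hNA : 0 < NA) (f : ℝ → ℝ) (pts : Fin (NA+1) → ℝ)
    (hmono : Monotone pts)
    (haff : ∀ i : Fin NA, ∃ p q : ℝ,
      ∀ x ∈ Set.Icc (pts i.castSucc) (pts i.succ), f x = p * x + q) :
    MeasureTheory.IntegrableOn f (Set.Icc (pts 0) (pts (Fin.last NA))) := by
  have hsub : Set.Icc (pts 0) (pts (Fin.last NA)) ⊆
      ⋃ i : Fin NA, Set.Icc (pts i.castSucc) (pts i.succ) := by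
    intro x hx
    rcases cover_piece NA hNA pts hmono hx with ⟨i, hi⟩
    exact Set.mem_iUnion.mpr ⟨i, hi⟩
  apply MeasureTheory.IntegrableOn.mono_set _ hsub
  rw [MeasureTheory.integrableOn_finite_iUnion]
  intro i
  rcases haff i with ⟨p, q, hpq⟩
  have : MeasureTheory.IntegrableOn (fun x => p * x + q)
      (Set.Icc (pts i.castSucc) (pts i.succ)) := by
    apply ContinuousOn.integrableOn_Icc
    fun_prop
  exact this.congr_fun (fun x hx => (hpq x hx).symm) measurableSet_Icc

theorem piecewise_affine_approx_normal_cdf_lower_bound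
    (a b u v δ : ℝ) (hab : a < b) (hu : a ≤ u) (huv : u < v) (hv : v ≤ b)
    (hδ : 0 < δ) (hΦ'' : ∀ x ∈ Set.Icc u v, δ ≤ |deriv (deriv Phi) x|) :
    ∃ K : ℝ, 0 < K ∧
      ∀ (NA : ℕ), 0 < NA →
      ∀ (f : ℝ → ℝ) (pts : Fin (NA + 1) → ℝ),
        Monotone pts → pts 0 = a → pts (Fin.last NA) = b →
        (∀ i : Fin NA, ∃ p q : ℝ,
          ∀ x ∈ Set.Icc (pts i.castSucc) (pts i.succ), f x = p * x + q) →
        K / (NA : ℝ) ^ 4 ≤ ∫ x in a..b, |Phi x - f x| := by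
  have hc : 0 < (Real.sqrt (2 * Real.pi))⁻¹ := by
    rw [inv_pos]
    exact Real.sqrt_pos.mpr (by positivity)
  -- determine the sign of Φ'' on [u,v]
  have hsign : ∃ ε : ℝ, (ε = 1 ∨ ε = -1) ∧ ∀ x ∈ Set.Icc u v, δ ≤ ε * deriv (deriv Phi) x := by
    have h0 : (0:ℝ) ∉ Set.Icc u v := by
      intro h0
      have h := hΦ'' 0 h0
      rw [Phi_deriv2] at h
      simp at h
      linarith
    rcases lt_or_ge 0 u with hupos | hule
    · refine ⟨-1, Or.inr rfl, ?_⟩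
      intro x hx
      have hxpos : 0 < x := lt_of_lt_of_le hupos hx.1
      have h := hΦ'' x hx
      rw [Phi_deriv2] at h ⊢
      have hneg : (Real.sqrt (2 * Real.pi))⁻¹ * (-x * Real.exp (-x ^ 2 / 2)) < 0 :=
        mul_neg_of_pos_of_neg hc
          (mul_neg_of_neg_of_pos (by linarith) (Real.exp_pos _))
      rw [abs_of_neg hneg] at h
      linarith
    · have hvneg : v < 0 := by
        rcases lt_or_ge v 0 with h | h
        · exact h
        · exact absurd ⟨hule, h⟩ h0
      refine ⟨1, Or.inl rfl, ?_⟩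
      intro x hx
      have hxneg : x < 0 := lt_of_le_of_lt hx.2 hvneg
      have h := hΦ'' x hx
      rw [Phi_deriv2] at h ⊢
      have hpos : 0 < (Real.sqrt (2 * Real.pi))⁻¹ * (-x * Real.exp (-x ^ 2 / 2)) :=
        mul_pos hc (mul_pos (by linarith) (Real.exp_pos _))
      rw [abs_of_pos hpos] at h
      linarith
  obtain ⟨ε, hε1, hεconv⟩ := hsign
  have habsε : |ε| = 1 := by rcases hε1 with h | h <;> simp [h]
  have hvu : 0 < v - u := by linarith
  refine ⟨δ * (v - u)^3 / 128, by positivity, ?_⟩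
  intro NA hNA f pts hmonop hpts0 hptsL haff
  have hPhiCont : Continuous Phi :=
    continuous_iff_continuousAt.mpr fun x => (Phi_hasDeriv x).continuousAt
  -- clamp the partition points to [u,v]
  set q : Fin (NA+1) → ℝ := fun j => max u (min (pts j) v) with hqdef
  have hq0 : q 0 = u := by
    simp only [hqdef, hpts0]
    rw [min_eq_left (by linarith), max_eq_left (by linarith)]
  have hqL : q (Fin.last NA) = v := by
    simp only [hqdef, hptsL]
    rw [min_eq_right (by linarith), max_eq_right (by linarith)]
  obtain ⟨i, hi⟩ := exists_big_piece NA hNA u v huv q hq0 hqL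
  set s := q i.castSucc with hs
  set t := q i.succ with ht
  set L := t - s with hLdef
  have hNApos : (0:ℝ) < NA := Nat.cast_pos.mpr hNA
  have hL0 : 0 < (v-u)/NA := div_pos hvu hNApos
  have hL : 0 < L := lt_of_lt_of_le hL0 hi
  have hstL : s + L = t := by rw [hLdef]; ring
  have hqu : ∀ j, u ≤ q j := fun j => le_max_left _ _
  have hqv : ∀ j, q j ≤ v := fun j => max_le huv.le (min_le_right _ _)
  have hics : pts i.castSucc ≤ pts i.succ := hmonop (Fin.castSucc_le_succ i)
  have hs_ge : pts i.castSucc ≤ s := by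
    rcases le_or_gt (pts i.castSucc) v with h | h
    · calc pts i.castSucc = min (pts i.castSucc) v := (min_eq_left h).symm
        _ ≤ s := le_max_right _ _
    · exfalso
      have hsv : s = v := by
        rw [hs, hqdef]
        simp only
        rw [min_eq_right h.le, max_eq_right huv.le]
      have htv : t = v := by
        rw [ht, hqdef]
        simp only
        rw [min_eq_right (by linarith : v ≤ pts i.succ), max_eq_right huv.le]
      rw [hLdef, hsv, htv] at hL
      linarith
  have ht_le : t ≤ pts i.succ := by
    rcases le_or_gt u (pts i.succ) with h | h
    · exact max_le h (min_le_left _ _)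
    · exfalso
      have htu : t = u := by
        rw [ht, hqdef]
        simp only
        rw [min_eq_left (by linarith : pts i.succ ≤ v), max_eq_left h.le]
      have hus : u ≤ s := hqu i.castSucc
      rw [hLdef, htu] at hL
      linarith
  have hsubpiece : Set.Icc s t ⊆ Set.Icc (pts i.castSucc) (pts i.succ) :=
    Set.Icc_subset_Icc hs_ge ht_le
  have hsuv : Set.Icc s t ⊆ Set.Icc u v := Set.Icc_subset_Icc (hqu _) (hqv _)
  have hus : u ≤ s := hqu _
  have htv : t ≤ v := hqv _
  obtain ⟨p0, q0, hpq⟩ := haff i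
  set w : ℝ → ℝ := fun x => ε * (Phi x - f x) with hw
  have hfint : MeasureTheory.IntegrableOn f (Set.Icc a b) := by
    have h := f_integrable NA hNA f pts hmonop haff
    rwa [hpts0, hptsL] at h
  have hPhifint : MeasureTheory.IntegrableOn (fun x => Phi x - f x) (Set.Icc a b) :=
    (hPhiCont.integrableOn_Icc).sub hfint
  have hwint : MeasureTheory.IntegrableOn w (Set.Icc s (s + L)) := by
    rw [hstL]
    have h4 : MeasureTheory.IntegrableOn (fun x => ε * (Phi x - f x)) (Set.Icc a b) :=
      hPhifint.const_mul ε
    exact h4.mono_set (Set.Icc_subset_Icc (by linarith) (by linarith))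
  have hconv : ∀ x ∈ Set.Icc s (s + L/2),
      δ * (L/4)^2 ≤ w x + w (x + L/2) - 2 * w (x + L/4) := by
    intro x hx
    have hx1 : x ∈ Set.Icc s t := ⟨hx.1, by have := hx.2; rw [← hstL]; linarith⟩
    have hx2 : x + L/2 ∈ Set.Icc s t := ⟨by linarith [hx.1], by have := hx.2; rw [← hstL]; linarith⟩
    have hx3 : x + L/4 ∈ Set.Icc s t := ⟨by linarith [hx.1], by have := hx.2; rw [← hstL]; linarith⟩
    have h1 := midpoint_conv δ u v ε hδ hεconv x (hsuv hx1) (x + L/2) (hsuv hx2)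
    rw [show (x + (x + L/2))/2 = x + L/4 by ring] at h1
    rw [show ((x + L/2) - x)/2 = L/4 by ring] at h1
    have hf1 := hpq x (hsubpiece hx1)
    have hf2 := hpq (x + L/2) (hsubpiece hx2)
    have hf3 := hpq (x + L/4) (hsubpiece hx3)
    calc δ * (L/4)^2 ≤ ε * Phi x + ε * Phi (x + L/2) - 2 * (ε * Phi (x + L/4)) := h1
      _ = w x + w (x + L/2) - 2 * w (x + L/4) := by
          simp only [hw]
          rw [hf1, hf2, hf3]
          ring
  have hkey := key_integral δ s L hδ hL w hwint hconv
  have hweq : (∫ x in s..(s+L), |w x|) = ∫ x in s..t, |Phi x - f x| := by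
    rw [hstL]
    apply intervalIntegral.integral_congr
    intro x _
    simp only [hw, abs_mul, habsε, one_mul]
  rw [hweq] at hkey
  have habf : MeasureTheory.IntegrableOn (fun x => |Phi x - f x|) (Set.Icc a b) :=
    hPhifint.abs
  have hIle : (∫ x in s..t, |Phi x - f x|) ≤ ∫ x in a..b, |Phi x - f x| := by
    apply intervalIntegral.integral_mono_interval (by linarith) (by linarith) (by linarith)
      (Filter.Eventually.of_forall fun x => abs_nonneg _)
    rw [intervalIntegrable_iff_integrableOn_Ioc_of_le hab.le]
    exact habf.mono_set Set.Ioc_subset_Icc_self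
  have hnum : δ * (v - u)^3 / 128 / (NA:ℝ)^4 ≤ δ * L^3 / 128 := by
    have h1 : ((v-u)/NA)^3 ≤ L^3 := pow_le_pow_left₀ hL0.le hi 3
    have h2 : ((v-u)/NA)^3 = (v-u)^3 / (NA:ℝ)^3 := div_pow _ _ _
    have h3 : (v-u)^3 / (NA:ℝ)^4 ≤ (v-u)^3 / (NA:ℝ)^3 := by
      apply div_le_div_of_nonneg_left (by positivity) (by positivity)
      have : (1:ℝ) ≤ (NA:ℝ) := by exact_mod_cast hNA
      calc (NA:ℝ)^3 = (NA:ℝ)^3 * 1 := by ring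
        _ ≤ (NA:ℝ)^3 * (NA:ℝ) := mul_le_mul_of_nonneg_left this (by positivity)
        _ = (NA:ℝ)^4 := by ring
    calc δ * (v - u)^3 / 128 / (NA:ℝ)^4 = δ/128 * ((v-u)^3 / (NA:ℝ)^4) := by ring
      _ ≤ δ/128 * ((v-u)^3 / (NA:ℝ)^3) := by
          apply mul_le_mul_of_nonneg_left h3 (by positivity)
      _ = δ/128 * ((v-u)/NA)^3 := by rw [h2]
      _ ≤ δ/128 * L^3 := mul_le_mul_of_nonneg_left h1 (by positivity)
      _ = δ * L^3 / 128 := by ring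
  linarith
end
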